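/- arXiv:1502.01145 — 4 statements merged into one kernel-verified Lean document; each statement's English description precedes it below -/
import Mathlib

section
/- Let T > 0, let A : [0,T] → M_{2m}(ℝ) be a smooth map and let B₁, …, B_k ∈ M_{2m}(ℝ) be matrices such that 𝕁A(t) and each 𝕁B_i are symmetric for all t ∈ [0,T]. Let S : [0,T] → M_{2m}(ℝ) be the solution of Ṡ(t) = A(t)S(t), S(0) = I_{2m}, and define recursively B_i⁰(t) := B_i and B_i^j(t) := (d/dt)B_i^{j−1}(t) + B_i^{j−1}(t)A(t) − A(t)B_i^{j−1}(t). If there exists t̄ ∈ [0,T] such that Span{ B_i^j(t̄) : 1 ≤ i ≤ k, j ∈ ℕ } = { Y ∈ M_{2m}(ℝ) : 𝕁Y is symmetric }, then the linear map from L²([0,T]; ℝᵏ) to M_{2m}(ℝ) sending v to Σ_{i=1}^k ∫₀ᵀ v_i(t) S(t)⁻¹ B_i S(t) dt is surjective onto { Y ∈ M_{2m}(ℝ) : 𝕁Y is symmetric }. (This is the statement that the End-Point mapping of the bilinear control system Ẋ = A(t)X + Σ u_i B_i X on the symplectic group is a submersion at the zero control, i.e. the system is controllable at first order around ū ≡ 0.)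 -/
open MeasureTheory

namespace Stmt0

/-- The space `M_{2m}(ℝ)` of real `2m × 2m` matrices, with rows/columns indexed by
`Fin m ⊕ Fin m` so that block decompositions are available. -/
abbrev Mat (m : ℕ) := Matrix (Fin m ⊕ Fin m) (Fin m ⊕ Fin m) ℝ

/-- The standard symplectic matrix `𝕁 = [[0, I_m], [−I_m, 0]]`. -/
noncomputable def Jm (m : ℕ) : Mat m := Matrix.fromBlocks 0 1 (-1) 0

/-- The sequence of matrices `B⁰(t) := B`,
`B^{j+1}(t) := (d/dt)B^j(t) + B^j(t)A(t) − A(t)B^j(t)`, with derivatives taken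
within the interval `[0,T]`. -/
noncomputable def Bseq {m : ℕ} (T : ℝ) (A : ℝ → Mat m) (B : Mat m) : ℕ → ℝ → Mat m
  | 0, _ => B
  | j + 1, t =>
      (Matrix.of fun a b => derivWithin (fun r => Bseq T A B j r a b) (Set.Icc 0 T) t)
        + (Bseq T A B j t * A t - A t * Bseq T A B j t)

/-! ### Auxiliary lemmas -/

open Matrix Set

lemma Jm_transpose (m : ℕ) : (Jm m)ᵀ = -(Jm m) := by
  simp [Jm, Matrix.fromBlocks_transpose, Matrix.fromBlocks_neg]

lemma Jm_mul_Jm (m : ℕ) : Jm m * Jm m = -1 := by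
  simp [Jm, Matrix.fromBlocks_multiply, Matrix.fromBlocks_neg, ← Matrix.fromBlocks_one]

lemma isUnit_det_Jm (m : ℕ) : IsUnit (Jm m).det := by
  have h : (Jm m).det * (Jm m).det = 1 := by
    rw [← Matrix.det_mul, Jm_mul_Jm]
    have : (-1 : Mat m) = (-1 : ℝ) • (1 : Mat m) := by simp
    rw [this, Matrix.det_smul, Matrix.det_one]
    simp [Fintype.card_sum]
  exact IsUnit.of_mul_eq_one _ h

/-- entrywise derivative of a matrix product -/
lemma hasDerivWithinAt_matmul {m : ℕ} {f g : ℝ → Mat m} {f' g' : Mat m} {s : Set ℝ} {t : ℝ}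
    (hf : ∀ a b, HasDerivWithinAt (fun r => f r a b) (f' a b) s t)
    (hg : ∀ a b, HasDerivWithinAt (fun r => g r a b) (g' a b) s t) :
    ∀ a b, HasDerivWithinAt (fun r => (f r * g r) a b)
      ((f' * g t + f t * g') a b) s t := by
  intro a b
  have : (fun r => (f r * g r) a b) = fun r => ∑ c, f r a c * g r c b := by
    funext r; simp [Matrix.mul_apply]
  rw [this, Matrix.add_apply, Matrix.mul_apply, Matrix.mul_apply, ← Finset.sum_add_distrib]
  exact HasDerivWithinAt.fun_sum fun c _ => ((hf a c).mul (hg c b)).congr_deriv (by ring)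

lemma diffOn_det {m : ℕ} {f : ℝ → Mat m} {s : Set ℝ}
    (hf : ∀ a b, DifferentiableOn ℝ (fun t => f t a b) s) :
    DifferentiableOn ℝ (fun t => (f t).det) s := by
  have : (fun t => (f t).det)
      = fun t => ∑ σ : Equiv.Perm (Fin m ⊕ Fin m),
          ((Equiv.Perm.sign σ : ℤ) : ℝ) * ∏ a, f t (σ a) a :=
    funext fun t => by rw [Matrix.det_apply']
  rw [this]
  exact DifferentiableOn.fun_sum fun σ _ =>
    (DifferentiableOn.fun_finsetProd (u := Finset.univ) fun a _ => hf (σ a) a).const_mul _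

lemma diffOn_adjugate {m : ℕ} {f : ℝ → Mat m} {s : Set ℝ}
    (hf : ∀ a b, DifferentiableOn ℝ (fun t => f t a b) s) (a b : Fin m ⊕ Fin m) :
    DifferentiableOn ℝ (fun t => (f t).adjugate a b) s := by
  have : (fun t => (f t).adjugate a b)
      = fun t => ((f t).updateRow b (Pi.single a 1)).det :=
    funext fun t => by rw [Matrix.adjugate_apply]
  rw [this]
  apply diffOn_det
  intro c d
  by_cases h : c = b
  · subst h; simp only [Matrix.updateRow_self]; exact differentiableOn_const _
  · simp only [Matrix.updateRow_ne h]; exact hf c d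

section Sprops

variable {m : ℕ} {T : ℝ}

lemma S_symplectic (hT : 0 < T) {A S : ℝ → Mat m}
    (hJA : ∀ t ∈ Set.Icc (0 : ℝ) T, (Jm m * A t).IsSymm)
    (hS0 : S 0 = 1)
    (hS : ∀ t ∈ Set.Icc (0 : ℝ) T, ∀ a b,
      HasDerivWithinAt (fun r => S r a b) ((A t * S t) a b) (Set.Icc 0 T) t) :
    ∀ t ∈ Set.Icc (0 : ℝ) T, (S t)ᵀ * Jm m * S t = Jm m := by
  have hD : ∀ t ∈ Set.Icc (0 : ℝ) T, ∀ a b,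
      HasDerivWithinAt (fun r => ((S r)ᵀ * Jm m * S r) a b) 0 (Set.Icc 0 T) t := by
    intro t ht a b
    have hSt := hS t ht
    have hTr : ∀ a b, HasDerivWithinAt (fun r => (S r)ᵀ a b)
        ((A t * S t)ᵀ a b) (Set.Icc 0 T) t := fun a b => hSt b a
    have hJc : ∀ a b, HasDerivWithinAt (fun r => Jm m a b)
        ((0 : Mat m) a b) (Set.Icc 0 T) t := fun a b => hasDerivWithinAt_const _ _ _
    have h1 := hasDerivWithinAt_matmul (m := m) hTr hJc
    have h2 := hasDerivWithinAt_matmul (m := m) h1 hSt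
    have h2' := h2 a b
    have key : ((A t * S t)ᵀ * Jm m + (S t)ᵀ * 0) * S t + (S t)ᵀ * Jm m * (A t * S t)
        = 0 := by
      have hsymm : (Jm m * A t)ᵀ = Jm m * A t := hJA t ht
      rw [Matrix.transpose_mul, Jm_transpose, Matrix.mul_neg] at hsymm
      have h2 : (A t)ᵀ * Jm m = -(Jm m * A t) := by rw [← hsymm, neg_neg]
      have h3 : (A t * S t)ᵀ * Jm m = (S t)ᵀ * ((A t)ᵀ * Jm m) := by
        rw [Matrix.transpose_mul, Matrix.mul_assoc]
      rw [h3, h2]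
      noncomm_ring
    rw [key] at h2'
    simpa using h2'
  have hconst : ∀ a b, ∀ x ∈ Set.Icc (0:ℝ) T,
      ((S x)ᵀ * Jm m * S x) a b = ((S 0)ᵀ * Jm m * S 0) a b := by
    intro a b
    apply constant_of_derivWithin_zero
    · intro x hx
      exact ((hD x hx a b).differentiableWithinAt)
    · intro x hx
      exact (hD x (Set.mem_Icc_of_Ico hx) a b).derivWithin
        ((uniqueDiffOn_Icc hT) x (Set.mem_Icc_of_Ico hx))
  intro t ht
  ext a b
  have := hconst a b t ht
  rw [this, hS0]
  simp

lemma det_S_mul_self {S : ℝ → Mat m}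
    (hsymp : ∀ t ∈ Set.Icc (0 : ℝ) T, (S t)ᵀ * Jm m * S t = Jm m) :
    ∀ t ∈ Set.Icc (0 : ℝ) T, (S t).det * (S t).det = 1 := by
  intro t ht
  have h := congrArg Matrix.det (hsymp t ht)
  rw [Matrix.det_mul, Matrix.det_mul, Matrix.det_transpose] at h
  have hJ : (Jm m).det ≠ 0 := (isUnit_det_Jm m).ne_zero
  have h2 : (S t).det * (S t).det * (Jm m).det = 1 * (Jm m).det := by
    rw [one_mul]; linarith [h]
  exact mul_right_cancel₀ hJ h2

lemma isUnit_det_S {S : ℝ → Mat m}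
    (hsymp : ∀ t ∈ Set.Icc (0 : ℝ) T, (S t)ᵀ * Jm m * S t = Jm m) :
    ∀ t ∈ Set.Icc (0 : ℝ) T, IsUnit (S t).det :=
  fun t ht => IsUnit.of_mul_eq_one _ (det_S_mul_self hsymp t ht)

lemma diffOn_Sinv {S : ℝ → Mat m}
    (hsymp : ∀ t ∈ Set.Icc (0 : ℝ) T, (S t)ᵀ * Jm m * S t = Jm m)
    (hSdiff : ∀ a b, DifferentiableOn ℝ (fun t => S t a b) (Set.Icc 0 T)) :
    ∀ a b, DifferentiableOn ℝ (fun t => (S t)⁻¹ a b) (Set.Icc 0 T) := by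
  intro a b
  have hmain : DifferentiableOn ℝ
      (fun t => (S t).det * (S t).adjugate a b) (Set.Icc 0 T) :=
    (diffOn_det hSdiff).mul (diffOn_adjugate hSdiff a b)
  apply hmain.congr
  intro t ht
  have hu := det_S_mul_self hsymp t ht
  have hinv : ((S t).det)⁻¹ = (S t).det := inv_eq_of_mul_eq_one_right hu
  rw [Matrix.inv_def, Matrix.smul_apply, Ring.inverse_eq_inv', hinv, smul_eq_mul]

lemma hasDeriv_Sinv (hT : 0 < T) {S A : ℝ → Mat m}
    (hunit : ∀ t ∈ Set.Icc (0 : ℝ) T, IsUnit (S t).det)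
    (hSinvdiff : ∀ a b, DifferentiableOn ℝ (fun t => (S t)⁻¹ a b) (Set.Icc 0 T))
    (hS : ∀ t ∈ Set.Icc (0 : ℝ) T, ∀ a b,
      HasDerivWithinAt (fun r => S r a b) ((A t * S t) a b) (Set.Icc 0 T) t) :
    ∀ t ∈ Set.Icc (0 : ℝ) T, ∀ a b,
      HasDerivWithinAt (fun r => (S r)⁻¹ a b) ((-((S t)⁻¹ * A t)) a b) (Set.Icc 0 T) t := by
  intro t ht
  have hud := (uniqueDiffOn_Icc hT) t ht
  set D : Mat m := Matrix.of fun a b => derivWithin (fun r => (S r)⁻¹ a b) (Set.Icc 0 T) t with hD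
  have hDer : ∀ a b, HasDerivWithinAt (fun r => (S r)⁻¹ a b) (D a b) (Set.Icc 0 T) t := by
    intro a b
    exact ((hSinvdiff a b t ht).hasDerivWithinAt)
  have hprod := hasDerivWithinAt_matmul (m := m) hDer (hS t ht)
  have hone : ∀ a b, HasDerivWithinAt (fun r => ((S r)⁻¹ * S r) a b) 0 (Set.Icc 0 T) t := by
    intro a b
    apply (hasDerivWithinAt_const t (Set.Icc 0 T) ((1 : Mat m) a b)).congr
    · intro x hx; rw [Matrix.nonsing_inv_mul _ (hunit x hx)]
    · rw [Matrix.nonsing_inv_mul _ (hunit t ht)]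
  have hDeq : D * S t + (S t)⁻¹ * (A t * S t) = 0 := by
    ext a b
    have h1 := (hprod a b).derivWithin (hud)
    have h2 := (hone a b).derivWithin (hud)
    rw [h1] at h2
    simpa using h2
  have hDval : D = -((S t)⁻¹ * A t) := by
    have h3 : D * S t = -((S t)⁻¹ * A t * S t) := by
      rw [eq_neg_iff_add_eq_zero, ← hDeq, Matrix.mul_assoc]
    have := congrArg (fun M => M * (S t)⁻¹) h3
    simp only [Matrix.mul_assoc, Matrix.mul_nonsing_inv _ (hunit t ht), Matrix.mul_one] at this
    rw [this]
    simp [Matrix.mul_assoc, Matrix.neg_mul, Matrix.mul_nonsing_inv _ (hunit t ht)]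
  intro a b
  rw [← hDval]
  exact hDer a b

lemma Bseq_contDiffOn (hT : 0 < T) {A : ℝ → Mat m}
    (hA : ∀ a b, ContDiffOn ℝ (⊤ : ℕ∞) (fun t => A t a b) (Set.Icc 0 T)) (B : Mat m) :
    ∀ j a b, ContDiffOn ℝ (⊤ : ℕ∞) (fun t => Bseq T A B j t a b) (Set.Icc 0 T) := by
  intro j
  induction j with
  | zero => intro a b; exact contDiffOn_const
  | succ j ih =>
    intro a b
    have h1 : ContDiffOn ℝ (⊤ : ℕ∞)
        (derivWithin (fun r => Bseq T A B j r a b) (Set.Icc 0 T)) (Set.Icc 0 T) :=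
      (ih a b).derivWithin (uniqueDiffOn_Icc hT) (by simp)
    have h2 : ContDiffOn ℝ (⊤ : ℕ∞)
        (fun t => (Bseq T A B j t * A t) a b) (Set.Icc 0 T) := by
      have : (fun t => (Bseq T A B j t * A t) a b)
          = fun t => ∑ c, Bseq T A B j t a c * A t c b :=
        funext fun t => by rw [Matrix.mul_apply]
      rw [this]
      exact ContDiffOn.sum fun c _ => (ih a c).mul (hA c b)
    have h3 : ContDiffOn ℝ (⊤ : ℕ∞)
        (fun t => (A t * Bseq T A B j t) a b) (Set.Icc 0 T) := by
      have : (fun t => (A t * Bseq T A B j t) a b)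
          = fun t => ∑ c, A t a c * Bseq T A B j t c b :=
        funext fun t => by rw [Matrix.mul_apply]
      rw [this]
      exact ContDiffOn.sum fun c _ => (hA a c).mul (ih c b)
    have : (fun t => Bseq T A B (j+1) t a b)
        = fun t => derivWithin (fun r => Bseq T A B j r a b) (Set.Icc 0 T) t
            + ((Bseq T A B j t * A t) a b - (A t * Bseq T A B j t) a b) := by
      funext t; simp [Bseq]
    rw [this]
    exact (h1.add (h2.sub h3))

lemma hasDeriv_conj (hT : 0 < T) {A S : ℝ → Mat m}
    (hA : ∀ a b, ContDiffOn ℝ (⊤ : ℕ∞) (fun t => A t a b) (Set.Icc 0 T)) (B : Mat m)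
    (hSinvD : ∀ t ∈ Set.Icc (0 : ℝ) T, ∀ a b,
      HasDerivWithinAt (fun r => (S r)⁻¹ a b) ((-((S t)⁻¹ * A t)) a b) (Set.Icc 0 T) t)
    (hS : ∀ t ∈ Set.Icc (0 : ℝ) T, ∀ a b,
      HasDerivWithinAt (fun r => S r a b) ((A t * S t) a b) (Set.Icc 0 T) t) :
    ∀ (j : ℕ), ∀ t ∈ Set.Icc (0 : ℝ) T, ∀ a b,
      HasDerivWithinAt (fun r => ((S r)⁻¹ * Bseq T A B j r * S r) a b)
        (((S t)⁻¹ * Bseq T A B (j+1) t * S t) a b) (Set.Icc 0 T) t := by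
  intro j t ht
  set P : ℝ → Mat m := Bseq T A B j with hP
  set P' : Mat m := Matrix.of fun a b => derivWithin (fun r => P r a b) (Set.Icc 0 T) t with hP'
  have hPD : ∀ a b, HasDerivWithinAt (fun r => P r a b) (P' a b) (Set.Icc 0 T) t := by
    intro a b
    exact (((Bseq_contDiffOn hT hA B j a b).differentiableOn
      (by simp)) t ht).hasDerivWithinAt
  have h1 := hasDerivWithinAt_matmul (m := m) (hSinvD t ht) hPD
  have h2 := hasDerivWithinAt_matmul (m := m) h1 (hS t ht)
  intro a b
  have key : (-((S t)⁻¹ * A t) * P t + (S t)⁻¹ * P') * S t + (S t)⁻¹ * P t * (A t * S t)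
      = (S t)⁻¹ * Bseq T A B (j+1) t * S t := by
    have hB1 : Bseq T A B (j+1) t = P' + (P t * A t - A t * P t) := by
      rw [hP', hP]; rfl
    rw [hB1]
    noncomm_ring
  have := h2 a b
  rw [key] at this
  exact this

lemma conj_symm {S Y : Mat m} (hsymp : Sᵀ * Jm m * S = Jm m) (hu : IsUnit S.det)
    (hY : (Jm m * Y).IsSymm) : (Jm m * (S * Y * S⁻¹)).IsSymm := by
  have hYJ : Yᵀ * Jm m = -(Jm m * Y) := by
    have h := hY.eq
    rw [Matrix.transpose_mul, Jm_transpose, Matrix.mul_neg] at h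
    rw [← h, neg_neg]
  have hSJ : Sᵀ * Jm m = Jm m * S⁻¹ := by
    have := congrArg (fun M => M * S⁻¹) hsymp
    simpa [Matrix.mul_assoc, Matrix.mul_nonsing_inv _ hu] using this
  have hJS : Jm m * S = (S⁻¹)ᵀ * Jm m := by
    have h2 : (S⁻¹)ᵀ * (Sᵀ * Jm m * S) = (S⁻¹)ᵀ * Jm m := congrArg _ hsymp
    rw [← Matrix.mul_assoc, ← Matrix.mul_assoc, ← Matrix.transpose_mul,
      Matrix.mul_nonsing_inv _ hu] at h2
    rw [Matrix.transpose_one, Matrix.one_mul] at h2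
    exact h2
  unfold Matrix.IsSymm
  calc (Jm m * (S * Y * S⁻¹))ᵀ = (S⁻¹)ᵀ * (Yᵀ * (Sᵀ * (Jm m)ᵀ)) := by
        simp only [Matrix.transpose_mul, Matrix.mul_assoc]
    _ = (S⁻¹)ᵀ * (Yᵀ * -(Sᵀ * Jm m)) := by rw [Jm_transpose]; simp [Matrix.mul_neg]
    _ = (S⁻¹)ᵀ * (Yᵀ * -(Jm m * S⁻¹)) := by rw [hSJ]
    _ = (S⁻¹)ᵀ * (-(Yᵀ * Jm m) * S⁻¹) := by simp [Matrix.mul_assoc, Matrix.mul_neg, Matrix.neg_mul]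
    _ = (S⁻¹)ᵀ * ((Jm m * Y) * S⁻¹) := by rw [hYJ, neg_neg]
    _ = ((S⁻¹)ᵀ * Jm m) * (Y * S⁻¹) := by simp [Matrix.mul_assoc]
    _ = (Jm m * S) * (Y * S⁻¹) := by rw [hJS]
    _ = Jm m * (S * Y * S⁻¹) := by simp [Matrix.mul_assoc]

lemma zero_on_Icc (hT : 0 < T) {q : ℝ → ℝ} (hq : ContinuousOn q (Set.Icc 0 T))
    (hnn : ∀ t, 0 ≤ q t) (hzero : ∫ t in Set.Ioc 0 T, q t = 0) :
    ∀ t ∈ Set.Icc (0:ℝ) T, q t = 0 := by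
  have hint : IntegrableOn q (Set.Ioc 0 T) volume :=
    (hq.integrableOn_Icc).mono_set Set.Ioc_subset_Icc_self
  have hae : q =ᵐ[volume.restrict (Set.Ioc 0 T)] 0 :=
    (integral_eq_zero_iff_of_nonneg hnn hint).mp hzero
  have hae' : q =ᵐ[volume.restrict (Set.Icc 0 T)] 0 := by
    rwa [← Measure.restrict_congr_set Ioc_ae_eq_Icc]
  have := Measure.eqOn_of_ae_eq hae' hq continuousOn_const
    (by rw [interior_Icc, closure_Ioo hT.ne])
  exact fun t ht => by simpa using this ht

end Sprops

instance finIoc (T : ℝ) : IsFiniteMeasure (volume.restrict (Set.Ioc (0:ℝ) T)) :=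
  ⟨by rw [Measure.restrict_apply_univ]; exact measure_Ioc_lt_top⟩

lemma intInt {k : ℕ} {T : ℝ} {v : ℝ → Fin k → ℝ} (hT : 0 < T)
    (hv : MemLp v 2 (volume.restrict (Set.Ioc 0 T))) {q : ℝ → ℝ}
    (hq : ContinuousOn q (Set.Icc 0 T)) (i : Fin k) :
    IntervalIntegrable (fun t => v t i * q t) volume 0 T := by
  rw [intervalIntegrable_iff_integrableOn_Ioc_of_le hT.le]
  have hvi : MemLp (fun t => v t i) 2 (volume.restrict (Set.Ioc 0 T)) := by
    have := (ContinuousLinearMap.proj (R := ℝ) (φ := fun _ : Fin k => ℝ) i).comp_memLp' hv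
    exact this
  have hint : Integrable (fun t => v t i) (volume.restrict (Set.Ioc 0 T)) :=
    hvi.integrable (by norm_num)
  obtain ⟨C, hC⟩ := (isCompact_Icc (a := (0:ℝ)) (b := T)).exists_bound_of_continuousOn hq
  have hmeas : AEStronglyMeasurable q (volume.restrict (Set.Ioc 0 T)) :=
    (hq.mono Set.Ioc_subset_Icc_self).aestronglyMeasurable measurableSet_Ioc
  have hbd : ∀ᵐ t ∂(volume.restrict (Set.Ioc 0 T)), ‖q t‖ ≤ C :=
    (ae_restrict_mem measurableSet_Ioc).mono fun t ht => hC t (Set.Ioc_subset_Icc_self ht)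
  have := Integrable.bdd_mul (c := C) hint hmeas hbd
  exact this.congr (by filter_upwards with t using mul_comm (q t) (v t i))

lemma phi_expand {m : ℕ} (f : Mat m →ₗ[ℝ] ℝ) (M : Mat m) :
    f M = ∑ a, ∑ b, M a b * f (Matrix.single a b 1) := by
  conv_lhs => rw [Matrix.matrix_eq_sum_single M]
  rw [map_sum]
  congr 1; funext a
  rw [map_sum]
  congr 1; funext b
  rw [← smul_eq_mul, ← _root_.map_smul]
  congr 1
  rw [Matrix.smul_single]
  simp


lemma sum_integral_swap {m k : ℕ} {T : ℝ}
    (g : Fin k → ℝ → Mat m) (v : ℝ → Fin k → ℝ)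
    (c : (Fin m ⊕ Fin m) → (Fin m ⊕ Fin m) → ℝ)
    (hint : ∀ i a b, IntervalIntegrable (fun t => v t i * g i t a b) volume 0 T) :
    ∑ a, ∑ b, (∑ i, ∫ t in (0:ℝ)..T, v t i * g i t a b) * c a b
      = ∑ i, ∫ t in (0:ℝ)..T, v t i * (∑ a, ∑ b, g i t a b * c a b) := by
  have step1 : ∀ a b, (∑ i, ∫ t in (0:ℝ)..T, v t i * g i t a b) * c a b
      = ∑ i, ∫ t in (0:ℝ)..T, v t i * g i t a b * c a b := by
    intro a b
    rw [Finset.sum_mul]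
    exact Finset.sum_congr rfl fun i _ => (intervalIntegral.integral_mul_const _ _).symm
  calc ∑ a, ∑ b, (∑ i, ∫ t in (0:ℝ)..T, v t i * g i t a b) * c a b
      = ∑ a, ∑ b, ∑ i, ∫ t in (0:ℝ)..T, v t i * g i t a b * c a b :=
        Finset.sum_congr rfl fun a _ => Finset.sum_congr rfl fun b _ => step1 a b
    _ = ∑ a, ∑ i, ∑ b, ∫ t in (0:ℝ)..T, v t i * g i t a b * c a b :=
        Finset.sum_congr rfl fun a _ => Finset.sum_comm
    _ = ∑ i, ∑ a, ∑ b, ∫ t in (0:ℝ)..T, v t i * g i t a b * c a b := Finset.sum_comm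
    _ = ∑ i, ∑ a, ∫ t in (0:ℝ)..T, ∑ b, v t i * g i t a b * c a b := by
        refine Finset.sum_congr rfl fun i _ => Finset.sum_congr rfl fun a _ => ?_
        exact (intervalIntegral.integral_finset_sum
          (f := fun b t => v t i * g i t a b * c a b)
          (fun b _ => (hint i a b).mul_const _)).symm
    _ = ∑ i, ∫ t in (0:ℝ)..T, ∑ a, ∑ b, v t i * g i t a b * c a b := by
        refine Finset.sum_congr rfl fun i _ => ?_
        have hInt : ∀ a : Fin m ⊕ Fin m, a ∈ (Finset.univ : Finset (Fin m ⊕ Fin m)) →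
            IntervalIntegrable (fun t => ∑ b, v t i * g i t a b * c a b) volume 0 T := by
          intro a _
          have := IntervalIntegrable.sum (μ := volume) (a := (0:ℝ)) (b := T)
            (f := fun b t => v t i * g i t a b * c a b)
            Finset.univ (fun b _ => (hint i a b).mul_const _)
          have heq : (∑ b : Fin m ⊕ Fin m, fun t => v t i * g i t a b * c a b)
              = fun t => ∑ b : Fin m ⊕ Fin m, v t i * g i t a b * c a b := by
            funext t
            simp [Finset.sum_apply]
          rw [heq] at this
          exact this
        have e1 : ∫ t in (0:ℝ)..T, ∑ a, (∑ b, v t i * g i t a b * c a b)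
            = ∑ a, ∫ t in (0:ℝ)..T, (∑ b, v t i * g i t a b * c a b) :=
          intervalIntegral.integral_finset_sum hInt
        exact e1.symm
    _ = ∑ i, ∫ t in (0:ℝ)..T, v t i * (∑ a, ∑ b, g i t a b * c a b) := by
        refine Finset.sum_congr rfl fun i _ => ?_
        congr 1
        funext t
        rw [Finset.mul_sum]
        refine Finset.sum_congr rfl fun a _ => ?_
        rw [Finset.mul_sum]
        exact Finset.sum_congr rfl fun b _ => by ring

/-- **First-order controllability** (Proposition 2.1 / `LIEPROP1`):
if `Span{ B_i^j(t̄) : i, j } = T_I Sp(m) = { Y : 𝕁Y symmetric }` for some `t̄ ∈ [0,T]`,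
then the differential at `u ≡ 0` of the End-Point mapping,
`v ↦ S(T)·Σ_i ∫₀ᵀ v_i(t) S(t)⁻¹ B_i S(t) dt`, is onto `T_I Sp(m)`; equivalently the map
`v ↦ Σ_i ∫₀ᵀ v_i(t) S(t)⁻¹ B_i S(t) dt` is surjective onto `{ Y : 𝕁Y symmetric }`. -/
theorem first_order_controllability {m k : ℕ} (hm : 1 ≤ m) (T : ℝ) (hT : 0 < T)
    (A : ℝ → Mat m) (B : Fin k → Mat m)
    (hA : ∀ a b, ContDiffOn ℝ (⊤ : ℕ∞) (fun t => A t a b) (Set.Icc 0 T))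
    (hJA : ∀ t ∈ Set.Icc (0 : ℝ) T, (Jm m * A t).IsSymm)
    (hJB : ∀ i, (Jm m * B i).IsSymm)
    (S : ℝ → Mat m) (hS0 : S 0 = 1)
    (hS : ∀ t ∈ Set.Icc (0 : ℝ) T, ∀ a b,
      HasDerivWithinAt (fun r => S r a b) ((A t * S t) a b) (Set.Icc 0 T) t)
    (tbar : ℝ) (htbar : tbar ∈ Set.Icc (0 : ℝ) T)
    (hspan :
      (Submodule.span ℝ {Y : Mat m | ∃ (i : Fin k) (j : ℕ), Y = Bseq T A (B i) j tbar}
        : Set (Mat m)) = {Y : Mat m | (Jm m * Y).IsSymm}) :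
    ∀ Y : Mat m, (Jm m * Y).IsSymm →
      ∃ v : ℝ → Fin k → ℝ,
        MemLp v 2 (volume.restrict (Set.Ioc 0 T)) ∧
        ∀ a b, (∑ i, ∫ t in (0 : ℝ)..T, v t i * ((S t)⁻¹ * B i * S t) a b) = Y a b := by
  intro Y hY
  -- basic properties of S
  have hsymp := S_symplectic hT hJA hS0 hS
  have hunit := isUnit_det_S hsymp
  have hSdiff : ∀ a b, DifferentiableOn ℝ (fun t => S t a b) (Set.Icc 0 T) :=
    fun a b t ht => (hS t ht a b).differentiableWithinAt
  have hSinvdiff := diffOn_Sinv hsymp hSdiff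
  have hSinvD := hasDeriv_Sinv hT hunit hSinvdiff hS
  have hconj : ∀ (i : Fin k) (j : ℕ), ∀ t ∈ Set.Icc (0 : ℝ) T, ∀ a b,
      HasDerivWithinAt (fun r => ((S r)⁻¹ * Bseq T A (B i) j r * S r) a b)
        (((S t)⁻¹ * Bseq T A (B i) (j+1) t * S t) a b) (Set.Icc 0 T) t :=
    fun i => hasDeriv_conj hT hA (B i) hSinvD hS
  have hB0 : ∀ (i : Fin k) (t : ℝ), Bseq T A (B i) 0 t = B i := fun i t => rfl
  have hcont : ∀ (i : Fin k) (j : ℕ) a b,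
      ContinuousOn (fun t => ((S t)⁻¹ * Bseq T A (B i) j t * S t) a b) (Set.Icc 0 T) :=
    fun i j a b t ht => ((hconj i j t ht a b).differentiableWithinAt).continuousWithinAt
  have hcont0 : ∀ (i : Fin k) a b,
      ContinuousOn (fun t => ((S t)⁻¹ * B i * S t) a b) (Set.Icc 0 T) := by
    intro i a b
    have := hcont i 0 a b
    simpa only [hB0] using this
  -- integrability
  have hII : ∀ (v : ℝ → Fin k → ℝ), MemLp v 2 (volume.restrict (Set.Ioc 0 T)) →
      ∀ (i : Fin k) a b,
        IntervalIntegrable (fun t => v t i * ((S t)⁻¹ * B i * S t) a b) volume 0 T :=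
    fun v hv i a b => intInt hT hv (hcont0 i a b) i
  -- the image submodule
  let V : Submodule ℝ (Mat m) :=
  { carrier := {Z : Mat m | ∃ v : ℝ → Fin k → ℝ,
      MemLp v 2 (volume.restrict (Set.Ioc 0 T)) ∧
      ∀ a b, (∑ i, ∫ t in (0 : ℝ)..T, v t i * ((S t)⁻¹ * B i * S t) a b) = Z a b},
    zero_mem' := ⟨0, MemLp.zero, fun a b => by simp⟩,
    add_mem' := by
      rintro X Z ⟨v, hv, hvE⟩ ⟨w, hw, hwE⟩
      refine ⟨v + w, hv.add hw, fun a b => ?_⟩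
      have hsplit : ∀ i : Fin k,
          (∫ t in (0:ℝ)..T, (v + w) t i * ((S t)⁻¹ * B i * S t) a b)
          = (∫ t in (0:ℝ)..T, v t i * ((S t)⁻¹ * B i * S t) a b)
            + (∫ t in (0:ℝ)..T, w t i * ((S t)⁻¹ * B i * S t) a b) := by
        intro i
        rw [← intervalIntegral.integral_add (hII v hv i a b) (hII w hw i a b)]
        congr 1; funext t; simp [add_mul]
      calc (∑ i : Fin k, ∫ t in (0:ℝ)..T, (v + w) t i * ((S t)⁻¹ * B i * S t) a b)
          = ∑ i : Fin k, ((∫ t in (0:ℝ)..T, v t i * ((S t)⁻¹ * B i * S t) a b)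
              + (∫ t in (0:ℝ)..T, w t i * ((S t)⁻¹ * B i * S t) a b)) :=
            Finset.sum_congr rfl fun i _ => hsplit i
        _ = (∑ i : Fin k, ∫ t in (0:ℝ)..T, v t i * ((S t)⁻¹ * B i * S t) a b)
              + ∑ i : Fin k, ∫ t in (0:ℝ)..T, w t i * ((S t)⁻¹ * B i * S t) a b :=
            Finset.sum_add_distrib
        _ = (X + Z) a b := by rw [hvE a b, hwE a b, Matrix.add_apply],
    smul_mem' := by
      rintro r X ⟨v, hv, hvE⟩
      refine ⟨r • v, hv.const_smul r, fun a b => ?_⟩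
      have hsc : ∀ i : Fin k,
          (∫ t in (0:ℝ)..T, (r • v) t i * ((S t)⁻¹ * B i * S t) a b)
          = r * ∫ t in (0:ℝ)..T, v t i * ((S t)⁻¹ * B i * S t) a b := by
        intro i
        rw [← intervalIntegral.integral_const_mul]
        congr 1; funext t; simp [mul_assoc]
      calc (∑ i : Fin k, ∫ t in (0:ℝ)..T, (r • v) t i * ((S t)⁻¹ * B i * S t) a b)
          = ∑ i : Fin k, r * ∫ t in (0:ℝ)..T, v t i * ((S t)⁻¹ * B i * S t) a b :=
            Finset.sum_congr rfl fun i _ => hsc i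
        _ = r * ∑ i : Fin k, ∫ t in (0:ℝ)..T, v t i * ((S t)⁻¹ * B i * S t) a b :=
            (Finset.mul_sum _ _ _).symm
        _ = (r • X) a b := by rw [hvE a b, Matrix.smul_apply, smul_eq_mul] }
  -- reduce to membership in V
  by_contra hnY
  have hYV : Y ∉ V := hnY
  obtain ⟨f, hfY, hfmap⟩ :=
    Submodule.exists_dual_map_eq_bot_of_notMem (p := V) hYV inferInstance
  have hfV : ∀ Z ∈ V, f Z = 0 := by
    intro Z hZ
    have : f Z ∈ V.map f := Submodule.mem_map_of_mem hZ
    rw [hfmap] at this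
    simpa using this
  -- continuity of t ↦ f (S⁻¹ Bⱼ S)
  have hqc : ∀ (i : Fin k) (j : ℕ),
      ContinuousOn (fun t => f ((S t)⁻¹ * Bseq T A (B i) j t * S t)) (Set.Icc 0 T) := by
    intro i j
    have hrw : (fun t => f ((S t)⁻¹ * Bseq T A (B i) j t * S t))
        = fun t => ∑ a, ∑ b, ((S t)⁻¹ * Bseq T A (B i) j t * S t) a b
            * f (Matrix.single a b 1) := funext fun t => phi_expand f _
    rw [hrw]
    exact continuousOn_finset_sum _ fun a _ => continuousOn_finset_sum _ fun b _ =>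
      (hcont i j a b).mul continuousOn_const
  have hqc0 : ∀ (i : Fin k),
      ContinuousOn (fun t => f ((S t)⁻¹ * B i * S t)) (Set.Icc 0 T) := by
    intro i
    have := hqc i 0
    simpa only [hB0] using this
  -- the control given by duality
  set v : ℝ → Fin k → ℝ :=
    fun t i => if t ∈ Set.Icc (0:ℝ) T then f ((S t)⁻¹ * B i * S t) else 0 with hv_def
  have hweq : ∀ t ∈ Set.Ioc (0:ℝ) T, v t = fun i => f ((S t)⁻¹ * B i * S t) := by
    intro t ht
    funext i
    simp only [hv_def]
    rw [if_pos (Set.Ioc_subset_Icc_self ht)]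
  have hwcont : ContinuousOn (fun t => (fun i => f ((S t)⁻¹ * B i * S t))) (Set.Icc 0 T) :=
    continuousOn_pi.2 fun i => hqc0 i
  have hvL2 : MemLp v 2 (volume.restrict (Set.Ioc 0 T)) := by
    have hwm : AEStronglyMeasurable (fun t => (fun i => f ((S t)⁻¹ * B i * S t)))
        (volume.restrict (Set.Ioc 0 T)) :=
      (hwcont.mono Set.Ioc_subset_Icc_self).aestronglyMeasurable measurableSet_Ioc
    have hvm : AEStronglyMeasurable v (volume.restrict (Set.Ioc 0 T)) := by
      apply hwm.congr
      exact (ae_restrict_mem measurableSet_Ioc).mono fun t ht => (hweq t ht).symm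
    obtain ⟨C, hC⟩ := (isCompact_Icc (a := (0:ℝ)) (b := T)).exists_bound_of_continuousOn hwcont
    apply MemLp.of_bound hvm C
    exact (ae_restrict_mem measurableSet_Ioc).mono fun t ht => by
      rw [hweq t ht]; exact hC t (Set.Ioc_subset_Icc_self ht)
  -- f of the image of v
  set Z : Mat m := Matrix.of fun a b =>
    ∑ i, ∫ t in (0:ℝ)..T, v t i * ((S t)⁻¹ * B i * S t) a b with hZ_def
  have hZV : Z ∈ V := ⟨v, hvL2, fun a b => rfl⟩
  have hfZ : f Z = 0 := hfV Z hZV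
  have hfZcalc : f Z = ∑ i, ∫ t in (0:ℝ)..T, v t i * f ((S t)⁻¹ * B i * S t) := by
    rw [phi_expand f Z]
    have hgood := sum_integral_swap (T := T) (g := fun i t => (S t)⁻¹ * B i * S t) (v := v)
      (c := fun a b => f (Matrix.single a b 1)) (fun i a b => hII v hvL2 i a b)
    calc ∑ a, ∑ b, Z a b * f (Matrix.single a b 1)
        = ∑ a, ∑ b, (∑ i, ∫ t in (0:ℝ)..T, v t i * ((S t)⁻¹ * B i * S t) a b)
            * f (Matrix.single a b 1) := rfl
      _ = ∑ i, ∫ t in (0:ℝ)..T, v t i * (∑ a, ∑ b, ((S t)⁻¹ * B i * S t) a b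
            * f (Matrix.single a b 1)) := hgood
      _ = ∑ i, ∫ t in (0:ℝ)..T, v t i * f ((S t)⁻¹ * B i * S t) := by
          refine Finset.sum_congr rfl fun i _ => ?_
          congr 1
          funext t
          rw [← phi_expand f ((S t)⁻¹ * B i * S t)]
  have hIoc : ∀ i : Fin k, (∫ t in (0:ℝ)..T, v t i * f ((S t)⁻¹ * B i * S t))
      = ∫ t in Set.Ioc (0:ℝ) T, (f ((S t)⁻¹ * B i * S t))^2 := by
    intro i
    rw [intervalIntegral.integral_of_le hT.le]
    apply setIntegral_congr_fun measurableSet_Ioc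
    intro t ht
    show v t i * f ((S t)⁻¹ * B i * S t) = f ((S t)⁻¹ * B i * S t) ^ 2
    have h1 : v t i = f ((S t)⁻¹ * B i * S t) := by
      simp only [hv_def]
      rw [if_pos (Set.Ioc_subset_Icc_self ht)]
    rw [h1]; ring
  have hsum0 : ∑ i : Fin k, ∫ t in Set.Ioc (0:ℝ) T, (f ((S t)⁻¹ * B i * S t))^2 = 0 := by
    rw [← Finset.sum_congr rfl fun i _ => hIoc i, ← hfZcalc, hfZ]
  have hnn : ∀ i : Fin k, (0:ℝ) ≤ ∫ t in Set.Ioc (0:ℝ) T, (f ((S t)⁻¹ * B i * S t))^2 :=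
    fun i => setIntegral_nonneg measurableSet_Ioc fun t _ => sq_nonneg _
  have hIzero : ∀ i : Fin k, (∫ t in Set.Ioc (0:ℝ) T, (f ((S t)⁻¹ * B i * S t))^2) = 0 :=
    fun i => (Finset.sum_eq_zero_iff_of_nonneg fun i _ => hnn i).mp hsum0 i (Finset.mem_univ i)
  have hbase : ∀ (i : Fin k), ∀ t ∈ Set.Icc (0:ℝ) T, f ((S t)⁻¹ * B i * S t) = 0 := by
    intro i t ht
    have := zero_on_Icc hT (q := fun t => (f ((S t)⁻¹ * B i * S t))^2)
      ((hqc0 i).pow 2) (fun t => sq_nonneg _) (hIzero i) t ht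
    exact (pow_eq_zero_iff two_ne_zero).mp this
  -- propagate to all derivatives
  have hall : ∀ (i : Fin k) (j : ℕ), ∀ t ∈ Set.Icc (0:ℝ) T,
      f ((S t)⁻¹ * Bseq T A (B i) j t * S t) = 0 := by
    intro i j
    induction j with
    | zero =>
      intro t ht
      have := hbase i t ht
      simpa only [hB0] using this
    | succ j ih =>
      intro t ht
      have hud := (uniqueDiffOn_Icc hT) t ht
      have hD1 : HasDerivWithinAt (fun r => f ((S r)⁻¹ * Bseq T A (B i) j r * S r))
          (f ((S t)⁻¹ * Bseq T A (B i) (j+1) t * S t)) (Set.Icc 0 T) t := by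
        have hrw : (fun r => f ((S r)⁻¹ * Bseq T A (B i) j r * S r))
            = fun r => ∑ a, ∑ b, ((S r)⁻¹ * Bseq T A (B i) j r * S r) a b
                * f (Matrix.single a b 1) := funext fun r => phi_expand f _
        rw [hrw, phi_expand f ((S t)⁻¹ * Bseq T A (B i) (j+1) t * S t)]
        exact HasDerivWithinAt.fun_sum fun a _ => HasDerivWithinAt.fun_sum fun b _ =>
          (hconj i j t ht a b).mul_const _
      have hD0 : HasDerivWithinAt (fun r => f ((S r)⁻¹ * Bseq T A (B i) j r * S r))
          0 (Set.Icc 0 T) t :=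
        (hasDerivWithinAt_const t (Set.Icc 0 T) (0:ℝ)).congr (fun x hx => ih x hx) (ih t ht)
      have h1 := hD1.derivWithin hud
      have h2 := hD0.derivWithin hud
      rw [h1] at h2
      exact h2
  -- the conjugated functional kills the tangent space
  have hψ : ∀ Z : Mat m, (Jm m * Z).IsSymm → f ((S tbar)⁻¹ * Z * S tbar) = 0 := by
    intro Z hZsym
    let ψ : Mat m →ₗ[ℝ] ℝ :=
    { toFun := fun X => f ((S tbar)⁻¹ * X * S tbar),
      map_add' := fun X₁ X₂ => by
        show f ((S tbar)⁻¹ * (X₁ + X₂) * S tbar)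
          = f ((S tbar)⁻¹ * X₁ * S tbar) + f ((S tbar)⁻¹ * X₂ * S tbar)
        rw [Matrix.mul_add, Matrix.add_mul, map_add],
      map_smul' := fun r X => by
        show f ((S tbar)⁻¹ * (r • X) * S tbar) = r • f ((S tbar)⁻¹ * X * S tbar)
        rw [Matrix.mul_smul, Matrix.smul_mul, _root_.map_smul] }
    have hle : Submodule.span ℝ {Y : Mat m | ∃ (i : Fin k) (j : ℕ), Y = Bseq T A (B i) j tbar}
        ≤ LinearMap.ker ψ := by
      rw [Submodule.span_le]
      rintro X ⟨i, j, rfl⟩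
      exact LinearMap.mem_ker.2 (hall i j tbar htbar)
    have hZmem : Z ∈ (Submodule.span ℝ
        {Y : Mat m | ∃ (i : Fin k) (j : ℕ), Y = Bseq T A (B i) j tbar} : Set (Mat m)) := by
      rw [hspan]; exact hZsym
    exact LinearMap.mem_ker.1 (hle hZmem)
  -- conclude
  have hZsym : (Jm m * (S tbar * Y * (S tbar)⁻¹)).IsSymm :=
    conj_symm (hsymp tbar htbar) (hunit tbar htbar) hY
  have hfinal := hψ (S tbar * Y * (S tbar)⁻¹) hZsym
  have hcollapse : (S tbar)⁻¹ * (S tbar * Y * (S tbar)⁻¹) * S tbar = Y := by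
    rw [Matrix.mul_assoc (S tbar) Y, Matrix.nonsing_inv_mul_cancel_left _ _ (hunit tbar htbar),
      Matrix.mul_assoc, Matrix.nonsing_inv_mul _ (hunit tbar htbar), Matrix.mul_one]
  rw [hcollapse] at hfinal
  exact hfY hfinal

end Stmt0
end

section
/- Let n ≥ 1, let S ∈ M_{2n}(ℝ) be a symplectic matrix and let L ⊆ ℝ^{2n} be a Lagrangian subspace with S(L) = L. Then there exist a matrix U ∈ M_{2n}(ℝ) that is both orthogonal (UᵀU = I) and symplectic (Uᵀ𝕁U = 𝕁), an invertible n×n matrix A, and an n×n matrix B with Bᵀ(Aᵀ)⁻¹ symmetric, such that U maps L onto the coordinate subspace ℝⁿ × {0} ⊆ ℝ^{2n} and U S U⁻¹ = [[A, B], [0, (Aᵀ)⁻¹]]. In these coordinates the block A represents the restriction of S to L. -/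
open Matrix

namespace Stmt13

/-- The standard symplectic matrix `𝕁 = [[0, I_n], [−I_n, 0]]`. -/
noncomputable def Jn (n : ℕ) : Matrix (Fin n ⊕ Fin n) (Fin n ⊕ Fin n) ℝ :=
  Matrix.fromBlocks 0 1 (-1) 0

lemma Jn_transpose (n : ℕ) : (Jn n)ᵀ = -(Jn n) := by
  simp [Jn, fromBlocks_transpose, fromBlocks_neg]

lemma Jn_mul_Jn (n : ℕ) : Jn n * Jn n = -1 := by
  simp [Jn, fromBlocks_multiply]
  rw [← Matrix.fromBlocks_one, fromBlocks_neg]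
  simp

lemma JtJ (n : ℕ) : (Jn n)ᵀ * Jn n = 1 := by
  rw [Jn_transpose, neg_mul, Jn_mul_Jn, neg_neg]

lemma triple_apply {n : ℕ} (M N P : Matrix (Fin n ⊕ Fin n) (Fin n ⊕ Fin n) ℝ)
    (a b : Fin n ⊕ Fin n) :
    (M * N * Pᵀ) a b = M a ⬝ᵥ N.mulVec (P b) := by
  simp only [Matrix.mul_apply, Matrix.mulVec, dotProduct, transpose_apply,
    Finset.sum_mul, Finset.mul_sum, mul_assoc]
  exact Finset.sum_comm

lemma mul_transpose_apply {n : ℕ} (M P : Matrix (Fin n ⊕ Fin n) (Fin n ⊕ Fin n) ℝ)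
    (a b : Fin n ⊕ Fin n) :
    (M * Pᵀ) a b = M a ⬝ᵥ P b := by
  simp [Matrix.mul_apply, dotProduct]

lemma dot_J_left {n : ℕ} (x y : (Fin n ⊕ Fin n) → ℝ) :
    (Jn n).mulVec x ⬝ᵥ y = -(x ⬝ᵥ (Jn n).mulVec y) := by
  rw [dotProduct_comm, Matrix.dotProduct_mulVec, ← Matrix.mulVec_transpose,
    Jn_transpose, Matrix.neg_mulVec, neg_dotProduct, ← dotProduct_comm]

lemma dot_J_J {n : ℕ} (x y : (Fin n ⊕ Fin n) → ℝ) :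
    (Jn n).mulVec x ⬝ᵥ (Jn n).mulVec y = x ⬝ᵥ y := by
  rw [Matrix.dotProduct_mulVec, ← Matrix.mulVec_transpose, Matrix.mulVec_mulVec, JtJ,
    Matrix.one_mulVec]

/-- Orthonormal family spanning part of `L`. -/
lemma exists_orthonormal {n : ℕ} (L : Submodule ℝ ((Fin n ⊕ Fin n) → ℝ))
    (hdim : Module.finrank ℝ L = n) :
    ∃ v : Fin n → ((Fin n ⊕ Fin n) → ℝ),
      (∀ i, v i ∈ L) ∧ (∀ i j, v i ⬝ᵥ v j = if i = j then 1 else 0) := by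
  set e : ((Fin n ⊕ Fin n) → ℝ) ≃ₗ[ℝ] EuclideanSpace ℝ (Fin n ⊕ Fin n) :=
    (WithLp.linearEquiv 2 ℝ ((Fin n ⊕ Fin n) → ℝ)).symm with he
  set L' : Submodule ℝ (EuclideanSpace ℝ (Fin n ⊕ Fin n)) := L.map (e : (Fin n ⊕ Fin n → ℝ) →ₗ[ℝ] EuclideanSpace ℝ (Fin n ⊕ Fin n)) with hL'
  have hfr : Module.finrank ℝ L' = n := by
    have := LinearEquiv.finrank_map_eq e L
    rw [hL']; exact this.trans hdim
  let b : OrthonormalBasis (Fin n) ℝ L' :=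
    (stdOrthonormalBasis ℝ L').reindex (finCongr hfr)
  refine ⟨fun i => e.symm ((b i : EuclideanSpace ℝ (Fin n ⊕ Fin n))), ?_, ?_⟩
  · intro i
    have hm : ((b i : EuclideanSpace ℝ (Fin n ⊕ Fin n))) ∈ L.map (e : (Fin n ⊕ Fin n → ℝ) →ₗ[ℝ] EuclideanSpace ℝ (Fin n ⊕ Fin n)) := (b i).2
    obtain ⟨y, hy, hey⟩ := Submodule.mem_map.mp hm
    have : e.symm ((b i : EuclideanSpace ℝ (Fin n ⊕ Fin n))) = y := by
      rw [← hey, LinearEquiv.coe_coe, LinearEquiv.symm_apply_apply]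
    simpa only [this] using hy
  · intro i j
    have h := orthonormal_iff_ite.mp b.orthonormal i j
    rw [real_inner_comm] at h
    rw [Submodule.coe_inner, PiLp.inner_apply] at h
    have hfun : ∀ z : EuclideanSpace ℝ (Fin n ⊕ Fin n), ∀ k, (e.symm z) k = z k :=
      fun _ _ => rfl
    simpa [dotProduct, RCLike.inner_apply, hfun] using h

/-- **Lemma `sympdec1`**: if `S` is symplectic and `L ⊆ ℝ^{2n}` is an `S`-invariant
Lagrangian subspace (for the form `ω(u,v) = uᵀ𝕁v`), then there is a matrix `U`, both
orthogonal and symplectic, carrying `L` onto `ℝⁿ × {0}` and such that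
`U S U⁻¹ = [[A, B], [0, (Aᵀ)⁻¹]]` with `A` invertible and `Bᵀ(Aᵀ)⁻¹` symmetric (in these
coordinates `A` represents the restriction of `S` to `L`). -/
theorem symplectic_lagrangian_normal_form {n : ℕ} (hn : 1 ≤ n)
    (S : Matrix (Fin n ⊕ Fin n) (Fin n ⊕ Fin n) ℝ)
    (hS : Sᵀ * Jn n * S = Jn n)
    (L : Submodule ℝ ((Fin n ⊕ Fin n) → ℝ))
    (hdim : Module.finrank ℝ L = n)
    (hLag : ∀ u ∈ L, ∀ v ∈ L, u ⬝ᵥ (Jn n).mulVec v = 0)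
    (hSL : Submodule.map (Matrix.mulVecLin S) L = L) :
    ∃ (U : Matrix (Fin n ⊕ Fin n) (Fin n ⊕ Fin n) ℝ)
      (A B : Matrix (Fin n) (Fin n) ℝ),
      Uᵀ * U = 1 ∧
      Uᵀ * Jn n * U = Jn n ∧
      IsUnit A ∧
      (Bᵀ * (Aᵀ)⁻¹).IsSymm ∧
      (∀ x : (Fin n ⊕ Fin n) → ℝ,
        x ∈ Submodule.map (Matrix.mulVecLin U) L ↔ ∀ i : Fin n, x (Sum.inr i) = 0) ∧
      U * S * U⁻¹ = Matrix.fromBlocks A B 0 (Aᵀ)⁻¹ := by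
  obtain ⟨v, hvL, hvOrth⟩ := exists_orthonormal L hdim
  set w : Fin n → ((Fin n ⊕ Fin n) → ℝ) := fun i => -((Jn n).mulVec (v i)) with hw
  set U : Matrix (Fin n ⊕ Fin n) (Fin n ⊕ Fin n) ℝ := Matrix.of (Sum.elim v w) with hU
  have hUl : ∀ i, U (Sum.inl i) = v i := fun i => rfl
  have hUr : ∀ i, U (Sum.inr i) = w i := fun i => rfl
  -- w i is orthogonal to everything in L
  have hwperp : ∀ i, ∀ z ∈ L, w i ⬝ᵥ z = 0 := by
    intro i z hz
    rw [hw]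
    simp only [neg_dotProduct]
    rw [dotProduct_comm]
    rw [hLag z hz (v i) (hvL i)]
    simp
  -- dot products among rows
  have hvw : ∀ i j, v i ⬝ᵥ w j = 0 := by
    intro i j
    rw [hw]
    simp only [dotProduct_neg]
    rw [hLag (v i) (hvL i) (v j) (hvL j)]
    simp
  have hwv : ∀ i j, w i ⬝ᵥ v j = 0 := by
    intro i j; rw [dotProduct_comm]; exact hvw j i
  have hww : ∀ i j, w i ⬝ᵥ w j = if i = j then 1 else 0 := by
    intro i j
    rw [hw]
    simp only [neg_dotProduct, dotProduct_neg, neg_neg]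
    rw [dot_J_J]
    exact hvOrth i j
  -- U is orthogonal
  have hUUt : U * Uᵀ = 1 := by
    ext a b
    rw [mul_transpose_apply]
    rcases a with i | i <;> rcases b with j | j <;>
      simp [hUl, hUr, hvOrth, hvw, hwv, hww, Matrix.one_apply]
  have hUtU : Uᵀ * U = 1 := mul_eq_one_comm.mp hUUt
  -- U is symplectic (in the form U J Uᵀ = J)
  have hJw : ∀ j, (Jn n).mulVec (w j) = v j := by
    intro j
    rw [hw]
    rw [Matrix.mulVec_neg, Matrix.mulVec_mulVec, Jn_mul_Jn, Matrix.neg_mulVec,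
      Matrix.one_mulVec, neg_neg]
  have hUJUt : U * Jn n * Uᵀ = Jn n := by
    ext a b
    rw [triple_apply]
    rcases a with i | i <;> rcases b with j | j
    · rw [hUl, hUl, hLag (v i) (hvL i) (v j) (hvL j)]
      simp [Jn]
    · rw [hUl, hUr, hJw]
      simp [Jn, hvOrth i j, Matrix.one_apply]
    · rw [hUr, hUl, hw]
      simp only [neg_dotProduct]
      rw [dot_J_J, hvOrth i j]
      simp [Jn, Matrix.one_apply]
    · rw [hUr (i := i), hUr (i := j), hJw, hw]
      simp only [neg_dotProduct]
      rw [dot_J_left, hLag (v i) (hvL i) (v j) (hvL j)]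
      simp [Jn]
  have hUJU : Uᵀ * Jn n * U = Jn n := by
    have h1 : Uᵀ * (U * Jn n * Uᵀ) * U = Jn n := by
      rw [← Matrix.mul_assoc, ← Matrix.mul_assoc, hUtU, one_mul, Matrix.mul_assoc, hUtU,
        mul_one]
    rw [hUJUt] at h1
    exact h1
  -- the image of v j under S stays in L
  have hSvL : ∀ j, S.mulVec (v j) ∈ L := by
    intro j
    rw [← hSL]
    exact ⟨v j, hvL j, by rw [Matrix.mulVecLin_apply]⟩
  -- T := U S Uᵀ has lower-left block 0
  set T : Matrix (Fin n ⊕ Fin n) (Fin n ⊕ Fin n) ℝ := U * S * Uᵀ with hTdef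
  set A := T.toBlocks₁₁ with hA
  set B := T.toBlocks₁₂ with hB
  set D := T.toBlocks₂₂ with hD
  have hC : T.toBlocks₂₁ = 0 := by
    ext i j
    show T (Sum.inr i) (Sum.inl j) = 0
    rw [hTdef, triple_apply, hUr, hUl]
    exact hwperp i _ (hSvL j)
  have hT : T = fromBlocks A B 0 D := by
    conv_lhs => rw [← Matrix.fromBlocks_toBlocks T]
    rw [hC]
  -- T is symplectic
  have key : ∀ X, Uᵀ * (Jn n * (U * X)) = Jn n * X := by
    intro X
    rw [← Matrix.mul_assoc, ← Matrix.mul_assoc, hUJU]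
  have keyS : ∀ X, Sᵀ * (Jn n * (S * X)) = Jn n * X := by
    intro X
    rw [← Matrix.mul_assoc, ← Matrix.mul_assoc, hS]
  have hTsymp : Tᵀ * Jn n * T = Jn n := by
    rw [hTdef]
    simp only [Matrix.transpose_mul, Matrix.transpose_transpose, Matrix.mul_assoc]
    rw [key (S * Uᵀ), keyS Uᵀ, ← Matrix.mul_assoc, hUJUt]
  -- extract block relations
  have hfb : (fromBlocks A B 0 D)ᵀ * Jn n * (fromBlocks A B 0 D)
      = fromBlocks 0 1 (-1) 0 := by
    rw [← hT]
    exact hTsymp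
  rw [Jn] at hfb
  simp only [Matrix.fromBlocks_transpose, Matrix.fromBlocks_multiply, Matrix.transpose_zero,
    Matrix.mul_zero, Matrix.zero_mul, Matrix.mul_one, Matrix.mul_neg, Matrix.neg_mul,
    mul_neg_one, add_zero, zero_add, mul_one,
    mul_zero, zero_mul, neg_zero] at hfb
  have h12 : Aᵀ * D = 1 := by
    have := congrArg Matrix.toBlocks₁₂ hfb
    simpa [Matrix.toBlocks_fromBlocks₁₂] using this
  have h21 : Dᵀ * A = 1 := by
    have := congrArg Matrix.toBlocks₂₁ hfb
    simp only [Matrix.toBlocks_fromBlocks₂₁] at this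
    -- this : -(Dᵀ * A) = -1 (up to simp normal form)
    simpa using this
  have h22 : Bᵀ * D = Dᵀ * B := by
    have := congrArg Matrix.toBlocks₂₂ hfb
    simp only [Matrix.toBlocks_fromBlocks₂₂] at this
    -- this : -(Dᵀ * B) + Bᵀ * D = 0 (up to simp normal form)
    have h := this
    abel_nf at h
    linear_combination (norm := abel) h
  have hAunit : IsUnit A := by
    have hADt : A * Dᵀ = 1 := mul_eq_one_comm.mp h21
    have : A.det * Dᵀ.det = 1 := by rw [← Matrix.det_mul, hADt, Matrix.det_one]
    exact (Matrix.isUnit_iff_isUnit_det A).mpr (isUnit_iff_exists_inv.mpr ⟨_, this⟩)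
  have hAinv : (Aᵀ)⁻¹ = D := Matrix.inv_eq_right_inv h12
  have hUinv : U⁻¹ = Uᵀ := Matrix.inv_eq_left_inv hUtU
  refine ⟨U, A, B, hUtU, hUJU, hAunit, ?_, ?_, ?_⟩
  · rw [Matrix.IsSymm, hAinv, Matrix.transpose_mul, Matrix.transpose_transpose, ← h22]
  · intro x
    constructor
    · rintro ⟨y, hy, rfl⟩
      intro i
      show U.mulVec y (Sum.inr i) = 0
      show U (Sum.inr i) ⬝ᵥ y = 0
      rw [hUr]
      exact hwperp i y hy
    · intro hx
      refine ⟨Uᵀ.mulVec x, ?_, ?_⟩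
      · have hy : Uᵀ.mulVec x = ∑ i : Fin n, x (Sum.inl i) • v i := by
          funext j
          show (fun a => Uᵀ j a) ⬝ᵥ x = _
          rw [dotProduct]
          rw [Fintype.sum_sum_type]
          have h2 : ∑ i : Fin n, Uᵀ j (Sum.inr i) * x (Sum.inr i) = 0 := by
            apply Finset.sum_eq_zero
            intro i _
            rw [hx i, mul_zero]
          rw [h2, add_zero]
          simp only [Matrix.transpose_apply, Finset.sum_apply, Pi.smul_apply,
            smul_eq_mul]
          exact Finset.sum_congr rfl fun i _ => by rw [hUl, mul_comm]
        rw [hy]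
        exact Submodule.sum_mem _ fun i _ => Submodule.smul_mem _ _ (hvL i)
      · show U.mulVec (Uᵀ.mulVec x) = x
        rw [Matrix.mulVec_mulVec, hUUt, Matrix.one_mulVec]
  · rw [hUinv, hAinv, ← hT]

end Stmt13
end

section
/- Let m ≥ 1, let R be a symmetric m×m real matrix and set 𝔸 := [[0, I_m], [−R, 0]] ∈ M_{2m}(ℝ). For 1 ≤ i ≤ j ≤ m let E(ij) be the symmetric m×m matrix with entries (E(ij))_{kl} = δ_{ik}δ_{jl} + δ_{il}δ_{jk} and ℰ(ij) := [[0, 0], [E(ij), 0]]. Then the real span of the set of matrices { ℰ(ij) : i ≤ j } ∪ { [ℰ(ij), 𝔸] : i ≤ j } ∪ { [[ℰ(ij), 𝔸], 𝔸] : i ≤ j } ∪ { [[ℰ(ij), 𝔸], [ℰ(kl), 𝔸]] : i ≤ j, k ≤ l } equals { Y ∈ M_{2m}(ℝ) : 𝕁Y is symmetric }, the tangent space at the identity of the symplectic group Sp(m); in particular this span has dimension m(2m+1). -/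
open Matrix

namespace Stmt16

/-- The symmetric matrix `E(ij)` with entries `(E(ij))_{kl} = δ_{ik}δ_{jl} + δ_{il}δ_{jk}`. -/
def Eij {m : ℕ} (i j : Fin m) : Matrix (Fin m) (Fin m) ℝ :=
  Matrix.of fun k l =>
    ((if i = k ∧ j = l then 1 else 0) : ℝ) + (if i = l ∧ j = k then 1 else 0)

/-- `ℰ(ij) = [[0,0],[E(ij),0]]`. -/
def calE {m : ℕ} (i j : Fin m) : Matrix (Fin m ⊕ Fin m) (Fin m ⊕ Fin m) ℝ :=
  Matrix.fromBlocks 0 0 (Eij i j) 0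

/-- `𝔸 = [[0, I_m],[−R, 0]]`. -/
noncomputable def Amat {m : ℕ} (R : Matrix (Fin m) (Fin m) ℝ) :
    Matrix (Fin m ⊕ Fin m) (Fin m ⊕ Fin m) ℝ :=
  Matrix.fromBlocks 0 1 (-R) 0

/-- The matrix bracket `[B, B'] = BB' − B'B`. -/
def br {N : Type*} [Fintype N] (X Y : Matrix N N ℝ) : Matrix N N ℝ := X * Y - Y * X

/-- The standard symplectic matrix `𝕁 = [[0, I_m], [−I_m, 0]]`. -/
noncomputable def Jm (m : ℕ) : Matrix (Fin m ⊕ Fin m) (Fin m ⊕ Fin m) ℝ :=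
  Matrix.fromBlocks 0 1 (-1) 0

/-- The generating family
`{ℰ(ij)} ∪ {[ℰ(ij),𝔸]} ∪ {[[ℰ(ij),𝔸],𝔸]} ∪ {[[ℰ(ij),𝔸],[ℰ(kl),𝔸]]}` (over `i ≤ j`, `k ≤ l`). -/
noncomputable def gens {m : ℕ} (R : Matrix (Fin m) (Fin m) ℝ) :
    Set (Matrix (Fin m ⊕ Fin m) (Fin m ⊕ Fin m) ℝ) :=
  {Y | ∃ i j : Fin m, i ≤ j ∧ Y = calE i j} ∪
  {Y | ∃ i j : Fin m, i ≤ j ∧ Y = br (calE i j) (Amat R)} ∪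
  {Y | ∃ i j : Fin m, i ≤ j ∧ Y = br (br (calE i j) (Amat R)) (Amat R)} ∪
  {Y | ∃ i j k l : Fin m, i ≤ j ∧ k ≤ l ∧
    Y = br (br (calE i j) (Amat R)) (br (calE k l) (Amat R))}

/-! ### Basic facts about `Eij` -/

lemma Eij_eq_std {m : ℕ} (i j : Fin m) :
    Eij i j = Matrix.single i j 1 + Matrix.single j i 1 := by
  ext k l
  simp [Eij, Matrix.single, and_comm]

lemma Eij_comm {m : ℕ} (i j : Fin m) : Eij i j = Eij j i := by
  rw [Eij_eq_std, Eij_eq_std, add_comm]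

lemma Eij_symm {m : ℕ} (i j : Fin m) : (Eij i j).IsSymm := by
  rw [Eij_eq_std]
  ext k l
  simp [Matrix.transpose_apply, Matrix.single, and_comm, add_comm]

lemma sum_smul_std {m : ℕ} (A : Matrix (Fin m) (Fin m) ℝ) :
    ∑ i, ∑ j, A i j • Matrix.single i j (1:ℝ) = A := by
  conv_rhs => rw [matrix_eq_sum_single A]
  refine Finset.sum_congr rfl fun i _ => Finset.sum_congr rfl fun j _ => ?_
  rw [smul_single, smul_eq_mul, mul_one]

lemma sum_smul_std' {m : ℕ} (A : Matrix (Fin m) (Fin m) ℝ) :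
    ∑ i, ∑ j, A i j • Matrix.single j i (1:ℝ) = Aᵀ := by
  rw [Finset.sum_comm]
  calc ∑ j, ∑ i, A i j • Matrix.single j i (1:ℝ)
      = ∑ j, ∑ i, Aᵀ j i • Matrix.single j i (1:ℝ) := rfl
    _ = Aᵀ := sum_smul_std _

lemma sum_Eij {m : ℕ} (A : Matrix (Fin m) (Fin m) ℝ) :
    ∑ i, ∑ j, A i j • Eij i j = A + Aᵀ := by
  have h : ∀ i j : Fin m, A i j • Eij i j =
      A i j • Matrix.single i j (1:ℝ) + A i j • Matrix.single j i (1:ℝ) := by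
    intro i j; rw [Eij_eq_std, smul_add]
  simp only [h, Finset.sum_add_distrib, sum_smul_std, sum_smul_std']

lemma sum_Fij {m : ℕ} (A : Matrix (Fin m) (Fin m) ℝ) :
    ∑ i, ∑ j, A i j • (Matrix.single i j (1:ℝ) - Matrix.single j i (1:ℝ)) = A - Aᵀ := by
  have h : ∀ i j : Fin m, A i j • (Matrix.single i j (1:ℝ) - Matrix.single j i (1:ℝ)) =
      A i j • Matrix.single i j (1:ℝ) - A i j • Matrix.single j i (1:ℝ) := by
    intro i j; rw [smul_sub]
  simp only [h, Finset.sum_sub_distrib, sum_smul_std, sum_smul_std']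

/-! ### Block computations -/

lemma fromBlocks_sub {m : ℕ} (A B C D A' B' C' D' : Matrix (Fin m) (Fin m) ℝ) :
    fromBlocks A B C D - fromBlocks A' B' C' D' =
      fromBlocks (A - A') (B - B') (C - C') (D - D') := by
  rw [sub_eq_add_neg, fromBlocks_neg, fromBlocks_add]
  simp [sub_eq_add_neg]

lemma br1 {m : ℕ} (E R : Matrix (Fin m) (Fin m) ℝ) :
    br (fromBlocks 0 0 E 0) (fromBlocks 0 1 (-R) 0) = fromBlocks (-E) 0 0 E := by
  simp [br, fromBlocks_multiply, fromBlocks_sub]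

lemma br2 {m : ℕ} (E R : Matrix (Fin m) (Fin m) ℝ) :
    br (fromBlocks (-E) 0 0 E) (fromBlocks 0 1 (-R) 0) =
      fromBlocks 0 (-(2:ℝ) • E) (-(E * R + R * E)) 0 := by
  simp [br, fromBlocks_multiply, fromBlocks_sub]
  constructor
  · ext k l; simp; ring
  · ext k l; simp [Matrix.add_apply]; ring

lemma br3 {m : ℕ} (E F : Matrix (Fin m) (Fin m) ℝ) :
    br (fromBlocks (-E) 0 0 E) (fromBlocks (-F) 0 0 F) =
      fromBlocks (br E F) 0 0 (br E F) := by
  simp [br, fromBlocks_multiply, fromBlocks_sub]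

/-! ### The tangent space as a submodule -/

noncomputable def Wsub (m : ℕ) : Submodule ℝ (Matrix (Fin m ⊕ Fin m) (Fin m ⊕ Fin m) ℝ) where
  carrier := {Y | (Jm m * Y).IsSymm}
  add_mem' := by
    intro a b ha hb
    simp only [Set.mem_setOf_eq, Matrix.IsSymm, mul_add, transpose_add] at *
    rw [ha, hb]
  zero_mem' := by simp [Matrix.IsSymm]
  smul_mem' := by
    intro c a ha
    simp only [Set.mem_setOf_eq, Matrix.IsSymm, mul_smul_comm, transpose_smul] at *
    rw [ha]

lemma mem_Wsub {m : ℕ} (Y : Matrix (Fin m ⊕ Fin m) (Fin m ⊕ Fin m) ℝ) :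
    Y ∈ Wsub m ↔ (Jm m * Y).IsSymm := Iff.rfl

lemma Jm_transpose {m : ℕ} : (Jm m)ᵀ = -(Jm m) := by
  simp [Jm, fromBlocks_transpose, fromBlocks_neg]

lemma flip {m : ℕ} {Z : Matrix (Fin m ⊕ Fin m) (Fin m ⊕ Fin m) ℝ} (hZ : (Jm m * Z).IsSymm) :
    Jm m * Z = -(Zᵀ * Jm m) := by
  rw [Matrix.IsSymm] at hZ
  rw [← hZ, transpose_mul, Jm_transpose, Matrix.mul_neg]

lemma br_mem_Wsub {m : ℕ} {X Y : Matrix (Fin m ⊕ Fin m) (Fin m ⊕ Fin m) ℝ}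
    (hX : X ∈ Wsub m) (hY : Y ∈ Wsub m) : br X Y ∈ Wsub m := by
  rw [mem_Wsub] at *
  have K : Jm m * (X * Y - Y * X) = Yᵀ * (Jm m * X) - Xᵀ * (Jm m * Y) := by
    conv_lhs => rw [mul_sub, ← mul_assoc, ← mul_assoc, flip hX, flip hY]
    simp only [neg_mul, mul_assoc]
    abel
  have hX' : (Jm m * X)ᵀ = Jm m * X := hX
  have hY' : (Jm m * Y)ᵀ = Jm m * Y := hY
  rw [Matrix.IsSymm, show br X Y = X * Y - Y * X from rfl, K]
  simp only [transpose_sub, transpose_mul, transpose_transpose, hX', hY']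
  conv_rhs => rw [← K]
  simp only [mul_sub, mul_assoc]

lemma calE_mem_Wsub {m : ℕ} (i j : Fin m) : calE i j ∈ Wsub m := by
  rw [mem_Wsub, calE, Jm, Matrix.IsSymm]
  rw [fromBlocks_multiply]
  simp [fromBlocks_transpose, (Eij_symm i j).eq]

lemma Amat_mem_Wsub {m : ℕ} {R : Matrix (Fin m) (Fin m) ℝ} (hR : R.IsSymm) :
    Amat R ∈ Wsub m := by
  rw [mem_Wsub, Amat, Jm, Matrix.IsSymm]
  rw [fromBlocks_multiply]
  simp [fromBlocks_transpose, hR.eq]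

lemma gens_subset_Wsub {m : ℕ} {R : Matrix (Fin m) (Fin m) ℝ} (hR : R.IsSymm) :
    gens R ⊆ (Wsub m : Set (Matrix (Fin m ⊕ Fin m) (Fin m ⊕ Fin m) ℝ)) := by
  rintro Y (((⟨i, j, -, rfl⟩ | ⟨i, j, -, rfl⟩) | ⟨i, j, -, rfl⟩) | ⟨i, j, k, l, -, -, rfl⟩)
  · exact calE_mem_Wsub i j
  · exact br_mem_Wsub (calE_mem_Wsub i j) (Amat_mem_Wsub hR)
  · exact br_mem_Wsub (br_mem_Wsub (calE_mem_Wsub i j) (Amat_mem_Wsub hR)) (Amat_mem_Wsub hR)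
  · exact br_mem_Wsub (br_mem_Wsub (calE_mem_Wsub i j) (Amat_mem_Wsub hR))
      (br_mem_Wsub (calE_mem_Wsub k l) (Amat_mem_Wsub hR))

/-! ### Block-injection linear maps -/

noncomputable def llm (m : ℕ) : Matrix (Fin m) (Fin m) ℝ →ₗ[ℝ]
    Matrix (Fin m ⊕ Fin m) (Fin m ⊕ Fin m) ℝ where
  toFun C := fromBlocks 0 0 C 0
  map_add' X Y := by rw [fromBlocks_add]; simp
  map_smul' r X := by rw [fromBlocks_smul]; simp

noncomputable def urm (m : ℕ) : Matrix (Fin m) (Fin m) ℝ →ₗ[ℝ]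
    Matrix (Fin m ⊕ Fin m) (Fin m ⊕ Fin m) ℝ where
  toFun B := fromBlocks 0 B 0 0
  map_add' X Y := by rw [fromBlocks_add]; simp
  map_smul' r X := by rw [fromBlocks_smul]; simp

noncomputable def pm (m : ℕ) : Matrix (Fin m) (Fin m) ℝ →ₗ[ℝ]
    Matrix (Fin m ⊕ Fin m) (Fin m ⊕ Fin m) ℝ where
  toFun E := fromBlocks (-E) 0 0 E
  map_add' X Y := by rw [fromBlocks_add]; simp [neg_add]; abel
  map_smul' r X := by rw [fromBlocks_smul]; simp

noncomputable def dm (m : ℕ) : Matrix (Fin m) (Fin m) ℝ →ₗ[ℝ]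
    Matrix (Fin m ⊕ Fin m) (Fin m ⊕ Fin m) ℝ where
  toFun K := fromBlocks K 0 0 K
  map_add' X Y := by rw [fromBlocks_add]; simp
  map_smul' r X := by rw [fromBlocks_smul]; simp

/-! ### Membership of generators -/

section Members

variable {m : ℕ} (R : Matrix (Fin m) (Fin m) ℝ)

local notation "V" => Submodule.span ℝ (gens R)

lemma calE_comm (i j : Fin m) : calE i j = calE j i := by
  rw [calE, calE, Eij_comm]

lemma gen1_mem (i j : Fin m) : calE i j ∈ V := by
  rcases le_total i j with h | h
  · exact Submodule.subset_span (Or.inl (Or.inl (Or.inl ⟨i, j, h, rfl⟩)))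
  · rw [calE_comm]
    exact Submodule.subset_span (Or.inl (Or.inl (Or.inl ⟨j, i, h, rfl⟩)))

lemma gen2_mem (i j : Fin m) : br (calE i j) (Amat R) ∈ V := by
  rcases le_total i j with h | h
  · exact Submodule.subset_span (Or.inl (Or.inl (Or.inr ⟨i, j, h, rfl⟩)))
  · rw [calE_comm]
    exact Submodule.subset_span (Or.inl (Or.inl (Or.inr ⟨j, i, h, rfl⟩)))

lemma gen3_mem (i j : Fin m) : br (br (calE i j) (Amat R)) (Amat R) ∈ V := by
  rcases le_total i j with h | h
  · exact Submodule.subset_span (Or.inl (Or.inr ⟨i, j, h, rfl⟩))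
  · rw [calE_comm]
    exact Submodule.subset_span (Or.inl (Or.inr ⟨j, i, h, rfl⟩))

lemma gen4_mem (i j k l : Fin m) :
    br (br (calE i j) (Amat R)) (br (calE k l) (Amat R)) ∈ V := by
  rcases le_total i j with h | h <;> rcases le_total k l with h' | h'
  · exact Submodule.subset_span (Or.inr ⟨i, j, k, l, h, h', rfl⟩)
  · rw [calE_comm k l]
    exact Submodule.subset_span (Or.inr ⟨i, j, l, k, h, h', rfl⟩)
  · rw [calE_comm i j]
    exact Submodule.subset_span (Or.inr ⟨j, i, k, l, h, h', rfl⟩)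
  · rw [calE_comm i j, calE_comm k l]
    exact Submodule.subset_span (Or.inr ⟨j, i, l, k, h, h', rfl⟩)

/-- Decomposition of a symmetric matrix through a linear map whose values on the `Eij`
lie in the span. -/
lemma symm_comb (f : Matrix (Fin m) (Fin m) ℝ →ₗ[ℝ]
      Matrix (Fin m ⊕ Fin m) (Fin m ⊕ Fin m) ℝ)
    (hf : ∀ i j : Fin m, f (Eij i j) ∈ V)
    {C : Matrix (Fin m) (Fin m) ℝ} (hC : C.IsSymm) : f C ∈ V := by
  have hCe : C = (2:ℝ)⁻¹ • ∑ i, ∑ j, C i j • Eij i j := by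
    rw [sum_Eij, hC.eq, ← two_smul ℝ C, smul_smul]
    norm_num
  rw [hCe, _root_.map_smul, map_sum]
  refine Submodule.smul_mem _ _ (Submodule.sum_mem _ fun i _ => ?_)
  rw [map_sum]
  refine Submodule.sum_mem _ fun j _ => ?_
  rw [_root_.map_smul]
  exact Submodule.smul_mem _ _ (hf i j)

lemma llm_mem {C : Matrix (Fin m) (Fin m) ℝ} (hC : C.IsSymm) : llm m C ∈ V := by
  refine symm_comb R (llm m) (fun i j => ?_) hC
  exact gen1_mem R i j

lemma pm_mem {E : Matrix (Fin m) (Fin m) ℝ} (hE : E.IsSymm) : pm m E ∈ V := by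
  refine symm_comb R (pm m) (fun i j => ?_) hE
  have : pm m (Eij i j) = br (calE i j) (Amat R) := by
    rw [calE, Amat, br1]; rfl
  rw [this]
  exact gen2_mem R i j

lemma urm_mem (hR : R.IsSymm) {B : Matrix (Fin m) (Fin m) ℝ} (hB : B.IsSymm) :
    urm m B ∈ V := by
  refine symm_comb R (urm m) (fun i j => ?_) hB
  set E := Eij i j with hE
  have hG : (E * R + R * E).IsSymm := by
    rw [Matrix.IsSymm, transpose_add, transpose_mul, transpose_mul,
      hR.eq, (Eij_symm i j).eq, add_comm]
  have key : br (br (calE i j) (Amat R)) (Amat R) =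
      fromBlocks 0 (-(2:ℝ) • E) (-(E * R + R * E)) 0 := by
    rw [calE, Amat, br1, br2]
  have comb : urm m E = (-(2:ℝ))⁻¹ •
      (br (br (calE i j) (Amat R)) (Amat R) + llm m (E * R + R * E)) := by
    rw [key]
    show urm m E = (-(2:ℝ))⁻¹ • (fromBlocks 0 (-(2:ℝ) • E) (-(E * R + R * E)) 0 +
      fromBlocks 0 0 (E * R + R * E) 0)
    rw [fromBlocks_add]
    simp only [add_zero, zero_add, neg_add_cancel]
    rw [fromBlocks_smul]
    show fromBlocks 0 E 0 0 = fromBlocks _ _ _ _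
    congr 1 <;> try simp
  rw [comb]
  exact Submodule.smul_mem _ _ (Submodule.add_mem _ (gen3_mem R i j) (llm_mem R hG))

lemma dm_F_mem (i j : Fin m) :
    dm m (Matrix.single i j (1:ℝ) - Matrix.single j i (1:ℝ)) ∈ V := by
  by_cases hij : i = j
  · subst hij
    rw [sub_self, map_zero]
    exact Submodule.zero_mem _
  · have hbr : br (Eij i i) (Eij i j) =
        (2:ℝ) • (Matrix.single i j (1:ℝ) - Matrix.single j i (1:ℝ)) := by
      have hij' : i ≠ j := hij
      have e1 : Matrix.single i i (1:ℝ) * Matrix.single j i 1 = 0 :=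
        Matrix.single_mul_single_of_ne (h := hij') ..
      have e2 : Matrix.single i j (1:ℝ) * Matrix.single i i 1 = 0 :=
        Matrix.single_mul_single_of_ne (h := Ne.symm hij') ..
      rw [br, Eij_eq_std, Eij_eq_std]
      rw [add_mul, mul_add, mul_add, add_mul]
      rw [Matrix.single_mul_single_same, Matrix.single_mul_single_same, e1, e2]
      simp only [mul_one, add_zero, zero_add]
      rw [two_smul]
      abel
    have hmem : dm m (br (Eij i i) (Eij i j)) ∈ V := by
      have : dm m (br (Eij i i) (Eij i j)) =
          br (br (calE i i) (Amat R)) (br (calE i j) (Amat R)) := by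
        rw [calE, calE, Amat, br1, br1, br3]; rfl
      rw [this]
      exact gen4_mem R i i i j
    have : dm m (Matrix.single i j (1:ℝ) - Matrix.single j i (1:ℝ)) =
        (2:ℝ)⁻¹ • dm m (br (Eij i i) (Eij i j)) := by
      rw [hbr, _root_.map_smul, smul_smul]
      norm_num
    rw [this]
    exact Submodule.smul_mem _ _ hmem

lemma dm_mem {K : Matrix (Fin m) (Fin m) ℝ} (hK : Kᵀ = -K) : dm m K ∈ V := by
  have hKe : K = (2:ℝ)⁻¹ • ∑ i, ∑ j,
      K i j • (Matrix.single i j (1:ℝ) - Matrix.single j i (1:ℝ)) := by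
    rw [sum_Fij, hK, sub_neg_eq_add, ← two_smul ℝ K, smul_smul]
    norm_num
  rw [hKe, _root_.map_smul, map_sum]
  refine Submodule.smul_mem _ _ (Submodule.sum_mem _ fun i _ => ?_)
  rw [map_sum]
  refine Submodule.sum_mem _ fun j _ => ?_
  rw [_root_.map_smul]
  exact Submodule.smul_mem _ _ (dm_F_mem R i j)

end Members

/-! ### The reverse inclusion -/

lemma Wsub_le_span {m : ℕ} {R : Matrix (Fin m) (Fin m) ℝ} (hR : R.IsSymm) :
    Wsub m ≤ Submodule.span ℝ (gens R) := by
  intro Y hY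
  set A := Y.toBlocks₁₁ with hA
  set B := Y.toBlocks₁₂ with hB0
  set C := Y.toBlocks₂₁ with hC0
  set D := Y.toBlocks₂₂ with hD0
  have hYb : Y = fromBlocks A B C D := (fromBlocks_toBlocks Y).symm
  have hJY : Jm m * Y = fromBlocks C D (-A) (-B) := by
    rw [hYb, Jm, fromBlocks_multiply]
    simp
  have hsym : (fromBlocks Cᵀ (-A)ᵀ Dᵀ (-B)ᵀ :
      Matrix (Fin m ⊕ Fin m) (Fin m ⊕ Fin m) ℝ) = fromBlocks C D (-A) (-B) := by
    have h := (mem_Wsub Y).mp hY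
    rw [Matrix.IsSymm, hJY, fromBlocks_transpose] at h
    exact h
  have hC : Cᵀ = C := by
    have := congrArg Matrix.toBlocks₁₁ hsym
    simpa [Matrix.toBlocks_fromBlocks₁₁] using this
  have hBs : Bᵀ = B := by
    have := congrArg Matrix.toBlocks₂₂ hsym
    simp only [Matrix.toBlocks_fromBlocks₂₂, transpose_neg] at this
    exact neg_inj.mp this
  have hD : D = -Aᵀ := by
    have := congrArg Matrix.toBlocks₁₂ hsym
    simp only [Matrix.toBlocks_fromBlocks₁₂, transpose_neg] at this
    exact this.symm
  set E : Matrix (Fin m) (Fin m) ℝ := -((2:ℝ)⁻¹ • (A + Aᵀ)) with hE0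
  set K : Matrix (Fin m) (Fin m) ℝ := (2:ℝ)⁻¹ • (A - Aᵀ) with hK0
  have hEs : E.IsSymm := by
    rw [Matrix.IsSymm, hE0]
    rw [transpose_neg, transpose_smul, transpose_add, transpose_transpose, add_comm]
  have hKs : Kᵀ = -K := by
    rw [hK0, transpose_smul, transpose_sub, transpose_transpose, ← smul_neg, neg_sub]
  have hdec : Y = llm m C + urm m B + pm m E + dm m K := by
    rw [hYb]
    show fromBlocks A B C D = fromBlocks 0 0 C 0 + fromBlocks 0 B 0 0 +
      fromBlocks (-E) 0 0 E + fromBlocks K 0 0 K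
    rw [fromBlocks_add, fromBlocks_add, fromBlocks_add]
    have e1 : (0 : Matrix (Fin m) (Fin m) ℝ) + 0 + -E + K = A := by
      rw [hE0, hK0]; module
    have e2 : (0 : Matrix (Fin m) (Fin m) ℝ) + 0 + E + K = D := by
      rw [hD, hE0, hK0]; module
    rw [e1, e2]
    simp only [add_zero, zero_add]
  rw [hdec]
  exact Submodule.add_mem _ (Submodule.add_mem _ (Submodule.add_mem _
    (llm_mem R hC) (urm_mem R hR hBs)) (pm_mem R hEs)) (dm_mem R hKs)

lemma span_eq_Wsub {m : ℕ} {R : Matrix (Fin m) (Fin m) ℝ} (hR : R.IsSymm) :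
    Submodule.span ℝ (gens R) = Wsub m :=
  le_antisymm (Submodule.span_le.mpr (gens_subset_Wsub hR)) (Wsub_le_span hR)

/-! ### Dimension count -/

noncomputable def toSymm (N : Type*) [Fintype N] [DecidableEq N] :
    (Sym2 N → ℝ) →ₗ[ℝ] Matrix N N ℝ where
  toFun f := Matrix.of fun i j => f s(i, j)
  map_add' _ _ := by ext; rfl
  map_smul' _ _ := by ext; rfl

noncomputable def symmSub (N : Type*) [Fintype N] [DecidableEq N] :
    Submodule ℝ (Matrix N N ℝ) where
  carrier := {X | X.IsSymm}
  add_mem' := fun ha hb => ha.add hb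
  zero_mem' := Matrix.isSymm_zero
  smul_mem' := fun c _ ha => ha.smul c

lemma toSymm_isSymm {N : Type*} [Fintype N] [DecidableEq N] (f : Sym2 N → ℝ) :
    (toSymm N f).IsSymm := by
  ext i j
  simp only [toSymm, LinearMap.coe_mk, AddHom.coe_mk, transpose_apply, of_apply]
  rw [Sym2.eq_swap]

noncomputable def symmEquiv (N : Type*) [Fintype N] [DecidableEq N] :
    (Sym2 N → ℝ) ≃ₗ[ℝ] symmSub N := by
  refine LinearEquiv.ofBijective
    (LinearMap.codRestrict (symmSub N) (toSymm N) fun f => toSymm_isSymm f) ⟨?_, ?_⟩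
  · intro f g h
    have h' : toSymm N f = toSymm N g := congrArg Subtype.val h
    funext s
    induction s using Sym2.ind with
    | _ i j => exact congrFun (congrFun (congrArg (fun M => (M : Matrix N N ℝ)) h') i) j
  · rintro ⟨X, hX⟩
    refine ⟨Sym2.lift ⟨fun i j => X i j, fun i j => (hX.apply j i)⟩, ?_⟩
    apply Subtype.ext
    ext i j
    simp [toSymm]

lemma finrank_symmSub (N : Type*) [Fintype N] [DecidableEq N] :
    Module.finrank ℝ (symmSub N) = Nat.choose (Fintype.card N + 1) 2 := by
  rw [← (symmEquiv N).finrank_eq, Module.finrank_pi, Sym2.card]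

lemma Jm_sq {m : ℕ} : Jm m * Jm m = -1 := by
  rw [Jm, fromBlocks_multiply]
  simp [← fromBlocks_one, fromBlocks_neg]

noncomputable def mulJequiv (m : ℕ) :
    Matrix (Fin m ⊕ Fin m) (Fin m ⊕ Fin m) ℝ ≃ₗ[ℝ]
      Matrix (Fin m ⊕ Fin m) (Fin m ⊕ Fin m) ℝ :=
  LinearEquiv.ofLinear (LinearMap.mulLeft ℝ (Jm m)) (LinearMap.mulLeft ℝ (-(Jm m)))
    (by ext X; simp [LinearMap.mulLeft_apply, ← mul_assoc, Jm_sq])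
    (by ext X; simp [LinearMap.mulLeft_apply, ← mul_assoc, Jm_sq])

lemma map_Wsub (m : ℕ) :
    (Wsub m).map (mulJequiv m : Matrix (Fin m ⊕ Fin m) (Fin m ⊕ Fin m) ℝ →ₗ[ℝ]
      Matrix (Fin m ⊕ Fin m) (Fin m ⊕ Fin m) ℝ) = symmSub (Fin m ⊕ Fin m) := by
  ext X
  rw [Submodule.mem_map]
  constructor
  · rintro ⟨Y, hY, rfl⟩
    exact (mem_Wsub Y).mp hY
  · intro hX
    refine ⟨-(Jm m) * X, ?_, ?_⟩
    · rw [mem_Wsub]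
      have : Jm m * (-(Jm m) * X) = X := by
        rw [← mul_assoc, Matrix.mul_neg, Jm_sq]
        simp
      rw [this]
      exact hX
    · show Jm m * (-(Jm m) * X) = X
      rw [← mul_assoc, Matrix.mul_neg, Jm_sq]
      simp

lemma finrank_Wsub (m : ℕ) : Module.finrank ℝ (Wsub m) = m * (2 * m + 1) := by
  have h1 := LinearEquiv.finrank_map_eq (mulJequiv m) (Wsub m)
  rw [map_Wsub] at h1
  rw [← h1, finrank_symmSub]
  have hcard : Fintype.card (Fin m ⊕ Fin m) = 2 * m := by
    simp [Fintype.card_sum, two_mul]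
  rw [hcard, Nat.choose_two_right]
  have h2 : 2 * m + 1 - 1 = 2 * m := by omega
  rw [h2]
  have h3 : (2 * m + 1) * (2 * m) = 2 * (m * (2 * m + 1)) := by ring
  rw [h3, Nat.mul_div_cancel_left _ (by norm_num : 0 < 2)]

/-! ### Main theorem -/

/-- **Spanning property** : the matrices `ℰ(ij)`, `[ℰ(ij),𝔸]`, `[[ℰ(ij),𝔸],𝔸]` and
`[[ℰ(ij),𝔸],[ℰ(kl),𝔸]]` span the tangent space at the identity of `Sp(m)`,
`{Y : 𝕁Y symmetric}`, whose dimension is `m(2m+1)`. -/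
theorem span_tangent_space {m : ℕ} (hm : 1 ≤ m)
    (R : Matrix (Fin m) (Fin m) ℝ) (hR : R.IsSymm) :
    ((Submodule.span ℝ (gens R) :
        Set (Matrix (Fin m ⊕ Fin m) (Fin m ⊕ Fin m) ℝ)) =
      {Y | (Jm m * Y).IsSymm}) ∧
    Module.finrank ℝ (Submodule.span ℝ (gens R)) = m * (2 * m + 1) := by
  constructor
  · rw [span_eq_Wsub hR]
    rfl
  · rw [span_eq_Wsub hR]
    exact finrank_Wsub m

end Stmt16
end

section
/- Let m ≥ 1, let R be a symmetric m×m real matrix and set 𝔸 := [[0, I_m], [−R, 0]] ∈ M_{2m}(ℝ). For 1 ≤ i ≤ j ≤ m let E(ij) be the symmetric m×m matrix with entries (E(ij))_{kl} = δ_{ik}δ_{jl} + δ_{il}δ_{jk} and ℰ(ij) := [[0, 0], [E(ij), 0]]. Then for every i ≤ j: (1) [[ℰ(ij), 𝔸], ℰ(ij)] = 2·[[0, 0], [(E(ij))², 0]], and this matrix belongs to Span{ ℰ(rs) : 1 ≤ r ≤ s ≤ m }; (2) [[[ℰ(ij), 𝔸], 𝔸], ℰ(ij)] = 2·[[−(E(ij))²,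 0], [0, (E(ij))²]], and this matrix belongs to Span{ [ℰ(rs), 𝔸] : 1 ≤ r ≤ s ≤ m }. -/
open Matrix

namespace Stmt17

/-- The symmetric matrix `E(ij)` with entries `(E(ij))_{kl} = δ_{ik}δ_{jl} + δ_{il}δ_{jk}`. -/
def Eij {m : ℕ} (i j : Fin m) : Matrix (Fin m) (Fin m) ℝ :=
  Matrix.of fun k l =>
    ((if i = k ∧ j = l then 1 else 0) : ℝ) + (if i = l ∧ j = k then 1 else 0)

/-- `ℰ(ij) = [[0,0],[E(ij),0]]`. -/
def calE {m : ℕ} (i j : Fin m) : Matrix (Fin m ⊕ Fin m) (Fin m ⊕ Fin m) ℝ :=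
  Matrix.fromBlocks 0 0 (Eij i j) 0

/-- `𝔸 = [[0, I_m],[−R, 0]]`. -/
noncomputable def Amat {m : ℕ} (R : Matrix (Fin m) (Fin m) ℝ) :
    Matrix (Fin m ⊕ Fin m) (Fin m ⊕ Fin m) ℝ :=
  Matrix.fromBlocks 0 1 (-R) 0

/-- The matrix bracket `[B, B'] = BB' − B'B`. -/
def br {N : Type*} [Fintype N] (X Y : Matrix N N ℝ) : Matrix N N ℝ := X * Y - Y * X


lemma Eij_eq {m : ℕ} (i j : Fin m) :
    Eij i j = single i j 1 + single j i 1 := by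
  ext k l
  simp [Eij, single, and_comm]

lemma Eij_sq {m : ℕ} (i j : Fin m) :
    ∃ a : ℝ, Eij i j * Eij i j = a • Eij i i + a • Eij j j := by
  by_cases h : i = j
  · subst h
    refine ⟨1, ?_⟩
    rw [Eij_eq]
    simp only [add_mul, mul_add, single_mul_single_same, mul_one]
    module
  · refine ⟨1/2, ?_⟩
    rw [Eij_eq, Eij_eq, Eij_eq]
    simp only [add_mul, mul_add, single_mul_single_same, mul_one]
    rw [single_mul_single_of_ne (c := (1:ℝ)) (i := i) (j := j) (h := Ne.symm h) (d := 1),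
      single_mul_single_of_ne (c := (1:ℝ)) (i := j) (j := i) (h := h) (d := 1)]
    module

lemma br1 {m : ℕ} (R : Matrix (Fin m) (Fin m) ℝ) (i j : Fin m) :
    br (calE i j) (Amat R) = Matrix.fromBlocks (-(Eij i j)) 0 0 (Eij i j) := by
  simp [br, calE, Amat, Matrix.fromBlocks_multiply, sub_eq_add_neg, Matrix.fromBlocks_neg, Matrix.fromBlocks_add]

lemma br2 {m : ℕ} (R : Matrix (Fin m) (Fin m) ℝ) (i j : Fin m) :
    br (br (calE i j) (Amat R)) (calE i j) =
      Matrix.fromBlocks 0 0 ((2:ℝ) • (Eij i j * Eij i j)) 0 := by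
  rw [br1]
  simp [br, calE, Matrix.fromBlocks_multiply, sub_eq_add_neg, Matrix.fromBlocks_neg,
    Matrix.fromBlocks_add, two_smul, Matrix.mul_neg]

lemma br3 {m : ℕ} (R : Matrix (Fin m) (Fin m) ℝ) (i j : Fin m) :
    br (br (br (calE i j) (Amat R)) (Amat R)) (calE i j) =
      Matrix.fromBlocks (-(2:ℝ) • (Eij i j * Eij i j)) 0 0 ((2:ℝ) • (Eij i j * Eij i j)) := by
  rw [br1]
  simp [br, Amat, calE, Matrix.fromBlocks_multiply, sub_eq_add_neg, Matrix.fromBlocks_neg,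
    Matrix.fromBlocks_add, two_smul, Matrix.mul_neg, Matrix.neg_mul]
  constructor <;> noncomm_ring

lemma blocksm {m : ℕ} (X : Matrix (Fin m) (Fin m) ℝ) :
    (2:ℕ) • Matrix.fromBlocks (0 : Matrix (Fin m) (Fin m) ℝ)
        (0 : Matrix (Fin m) (Fin m) ℝ) X (0 : Matrix (Fin m) (Fin m) ℝ) =
      Matrix.fromBlocks 0 0 ((2:ℝ) • X) 0 := by
  rw [two_smul, Matrix.fromBlocks_add]
  congr 1 <;> simp [two_smul]

lemma blocksm2 {m : ℕ} (X : Matrix (Fin m) (Fin m) ℝ) :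
    (2:ℕ) • Matrix.fromBlocks (-X) (0 : Matrix (Fin m) (Fin m) ℝ)
        (0 : Matrix (Fin m) (Fin m) ℝ) X =
      Matrix.fromBlocks (-(2:ℝ) • X) 0 0 ((2:ℝ) • X) := by
  rw [two_smul, Matrix.fromBlocks_add]
  congr 1 <;> simp [two_smul] <;> abel

lemma decomp1 {m : ℕ} (i j : Fin m) (a : ℝ)
    (ha : Eij i j * Eij i j = a • Eij i i + a • Eij j j) :
    Matrix.fromBlocks 0 0 ((2:ℝ) • (Eij i j * Eij i j)) 0 =
      (2*a) • calE i i + (2*a) • calE j j := by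
  rw [ha]
  ext (k|k) (l|l) <;>
    simp [calE, Matrix.fromBlocks, Eij, mul_add] <;> ring

lemma decomp2 {m : ℕ} (R : Matrix (Fin m) (Fin m) ℝ) (i j : Fin m) (a : ℝ)
    (ha : Eij i j * Eij i j = a • Eij i i + a • Eij j j) :
    Matrix.fromBlocks (-(2:ℝ) • (Eij i j * Eij i j)) 0 0 ((2:ℝ) • (Eij i j * Eij i j)) =
      (2*a) • br (calE i i) (Amat R) + (2*a) • br (calE j j) (Amat R) := by
  rw [ha, br1, br1]
  ext (k|k) (l|l) <;>
    simp [Matrix.fromBlocks, Eij, mul_add] <;> ring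


/-- The bracket conditions at second order for the geodesic control system:
`[[ℰ(ij),𝔸], ℰ(ij)] = 2[[0,0],[E(ij)²,0]] ∈ Span{ℰ(rs)}` and
`[[[ℰ(ij),𝔸],𝔸], ℰ(ij)] = 2[[−E(ij)²,0],[0,E(ij)²]] ∈ Span{[ℰ(rs),𝔸]}`. -/
theorem second_order_bracket_conditions {m : ℕ} (hm : 1 ≤ m)
    (R : Matrix (Fin m) (Fin m) ℝ) (hR : R.IsSymm) :
    ∀ i j : Fin m, i ≤ j →
      (br (br (calE i j) (Amat R)) (calE i j) =
          2 • Matrix.fromBlocks 0 0 (Eij i j * Eij i j) 0 ∧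
        br (br (calE i j) (Amat R)) (calE i j) ∈
          Submodule.span ℝ {Y | ∃ r s : Fin m, r ≤ s ∧ Y = calE r s}) ∧
      (br (br (br (calE i j) (Amat R)) (Amat R)) (calE i j) =
          2 • Matrix.fromBlocks (-(Eij i j * Eij i j)) 0 0 (Eij i j * Eij i j) ∧
        br (br (br (calE i j) (Amat R)) (Amat R)) (calE i j) ∈
          Submodule.span ℝ {Y | ∃ r s : Fin m, r ≤ s ∧ Y = br (calE r s) (Amat R)}) := by
  intro i j hij
  obtain ⟨a, ha⟩ := Eij_sq i j
  refine ⟨⟨?_, ?_⟩, ?_, ?_⟩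
  · rw [br2, blocksm]
  · rw [br2 R i j, decomp1 i j a ha]
    exact Submodule.add_mem _
      (Submodule.smul_mem _ _ (Submodule.subset_span ⟨i, i, le_rfl, rfl⟩))
      (Submodule.smul_mem _ _ (Submodule.subset_span ⟨j, j, le_rfl, rfl⟩))
  · rw [br3, blocksm2]
  · rw [br3 R i j, decomp2 R i j a ha]
    exact Submodule.add_mem _
      (Submodule.smul_mem _ _ (Submodule.subset_span ⟨i, i, le_rfl, rfl⟩))
      (Submodule.smul_mem _ _ (Submodule.subset_span ⟨j, j, le_rfl, rfl⟩))


end Stmt17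
end
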